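/- arXiv:1805.06077 — 5 statements merged into one kernel-verified Lean document; each statement's English description precedes it below -/
import Mathlib

section
/- The number of permutations of {1,...,n} avoiding the consecutive pattern 123 (i.e., having no index i with π(i) < π(i+1) < π(i+2)) satisfies the recurrence a(n) = n·a(n-1) - C(n,3)·a(n-3) + C(n,4)·a(n-4) - C(n,6)·a(n-6) + C(n,7)·a(n-7) - ..., i.e., a(n) = n·a(n-1) + Σ_{m≥1} [ -C(n,3m)·a(n-3m) + C(n,3m+1)·a(n-3m-1) ], with a(0)=1 and a(k)=0 for k<0. -/
/-- A word avoids the increasing consecutive pattern `1 2 ... r` if it has no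
strictly increasing factor (consecutive subword) of length `r`. -/
def AvoidsInc {α : Type*} [LT α] (r : ℕ) (w : List α) : Prop :=
  ¬ ∃ l : List α, l <:+: w ∧ l.length = r ∧ l.Chain' (· < ·)

/-- `permAvoidCount r n` is the number of permutations of `{1,...,n}` avoiding the
consecutive pattern `1 2 ... r`. -/
noncomputable def permAvoidCount (r n : ℕ) : ℕ :=
  Nat.card {π : Equiv.Perm (Fin n) // AvoidsInc r ((List.finRange n).map ⇑π)}

namespace PA123

open List Finset

/-! ### Index-based characterization of avoidance -/

/-- An ascent at position `i`. -/
def Asc {α : Type*} [LT α] (w : List α) (i : ℕ) : Prop :=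
  ∃ h : i + 1 < w.length, w[i] < w[i + 1]

/-- A bad (strictly increasing) triple at position `i`. -/
def Bad3 {α : Type*} [LT α] (w : List α) : Prop :=
  ∃ i, Asc w i ∧ Asc w (i + 1)

theorem asc_iff_lt {α : Type*} [LT α] (w : List α) (i : ℕ) (h : i + 1 < w.length) :
    Asc w i ↔ w[i] < w[i + 1] := by
  constructor
  · rintro ⟨h', hlt⟩; exact hlt
  · intro hlt; exact ⟨h, hlt⟩

theorem asc_drop {α : Type*} [LT α] (w : List α) (k i : ℕ) :
    Asc (w.drop k) i ↔ Asc w (k + i) := by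
  constructor
  · rintro ⟨h, hlt⟩
    have hlen : k + i + 1 < w.length := by
      have : (w.drop k).length = w.length - k := List.length_drop; omega
    refine ⟨hlen, ?_⟩
    have e1 : (w.drop k)[i] = w[k + i] := List.getElem_drop
    have e2 : (w.drop k)[i + 1] = w[k + (i + 1)] := List.getElem_drop
    rw [e1, e2] at hlt
    have e3 : k + (i + 1) = k + i + 1 := by omega
    simpa [e3] using hlt
  · rintro ⟨h, hlt⟩
    have hlen : i + 1 < (w.drop k).length := by
      have : (w.drop k).length = w.length - k := List.length_drop; omega
    refine ⟨hlen, ?_⟩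
    have e1 : (w.drop k)[i]'(by omega) = w[k + i] := List.getElem_drop
    have e2 : (w.drop k)[i + 1] = w[k + (i + 1)] := List.getElem_drop
    rw [e1, e2]
    have e3 : k + (i + 1) = k + i + 1 := by omega
    simpa [e3] using hlt

theorem take3_drop {α : Type*} [LT α] (w : List α) (k : ℕ) (h : k + 2 < w.length) :
    (w.drop k).take 3 = [w[k], w[k+1], w[k+2]] := by
  rw [List.drop_eq_getElem_cons (show k < w.length by omega),
    List.drop_eq_getElem_cons (show k + 1 < w.length by omega),
    List.drop_eq_getElem_cons (show k + 1 + 1 < w.length by omega)]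
  rfl

theorem avoidsInc_iff_not_bad3 {α : Type*} [LinearOrder α] (w : List α) :
    AvoidsInc 3 w ↔ ¬ Bad3 w := by
  rw [AvoidsInc, not_iff_not]
  constructor
  · rintro ⟨l, ⟨u, v, rfl⟩, hlen, hch⟩
    refine ⟨u.length, ?_, ?_⟩
    · have e : u.length = u.length + 0 := by omega
      rw [e, ← asc_drop]
      have hdrop : (u ++ l ++ v).drop u.length = l ++ v := by
        rw [List.append_assoc, List.drop_left]
      rw [hdrop]
      have h0 : 0 + 1 < (l ++ v).length := by
        rw [List.length_append, hlen]; omega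
      refine ⟨h0, ?_⟩
      have e0 : (l ++ v)[0] = l[0]'(by omega) := List.getElem_append_left (by omega)
      have e1 : (l ++ v)[1] = l[1]'(by omega) := List.getElem_append_left (by omega)
      rw [e0, e1]
      have := List.isChain_iff_getElem.mp hch 0 (by omega)
      simpa using this
    · have e : u.length + 1 = u.length + 1 + 0 := by omega
      rw [e, ← asc_drop]
      have hdrop : (u ++ l ++ v).drop (u.length + 1) = l.drop 1 ++ v := by
        have h' : (u ++ l.take 1) ++ (l.drop 1 ++ v) = u ++ l ++ v := by
          rw [List.append_assoc u, ← List.append_assoc (l.take 1), List.take_append_drop,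
            ← List.append_assoc]
        rw [← h']
        have hl1 : (u ++ l.take 1).length = u.length + 1 := by
          rw [List.length_append, List.length_take]; omega
        rw [← hl1, List.drop_left]
      rw [hdrop]
      have h0 : 0 + 1 < (l.drop 1 ++ v).length := by
        rw [List.length_append, List.length_drop, hlen]; omega
      refine ⟨h0, ?_⟩
      have e0 : (l.drop 1 ++ v)[0] = (l.drop 1)[0]'(by rw [List.length_drop, hlen]; omega) :=
        List.getElem_append_left (by rw [List.length_drop, hlen]; omega)
      have e1 : (l.drop 1 ++ v)[1] = (l.drop 1)[1]'(by rw [List.length_drop, hlen]; omega) :=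
        List.getElem_append_left (by rw [List.length_drop, hlen]; omega)
      have f0 : (l.drop 1)[0]'(by rw [List.length_drop, hlen]; omega) = l[1]'(by omega) :=
        List.getElem_drop
      have f1 : (l.drop 1)[1]'(by rw [List.length_drop, hlen]; omega) = l[2]'(by omega) :=
        List.getElem_drop
      rw [e0, e1, f0, f1]
      have := List.isChain_iff_getElem.mp hch 1 (by omega)
      simpa using this
  · rintro ⟨i, ⟨h1, hlt1⟩, ⟨h2, hlt2⟩⟩
    have hlen : i + 2 < w.length := by omega
    refine ⟨(w.drop i).take 3,
      ((w.drop i).take_prefix 3).isInfix.trans (w.drop_suffix i).isInfix, ?_, ?_⟩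
    · rw [take3_drop w i hlen]; rfl
    · rw [take3_drop w i hlen]
      have hlt2' : w[i + 1] < w[i + 2] := by
        simpa [show i + 1 + 1 = i + 2 from rfl] using hlt2
      simp [List.Chain', List.isChain_cons_cons, hlt1, hlt2']

theorem avoidsInc_of_infix {α : Type*} [LT α] {r : ℕ} {l w : List α}
    (hl : l <:+: w) (hw : AvoidsInc r w) : AvoidsInc r l := by
  rintro ⟨m, hm, hlen, hch⟩
  exact hw ⟨m, hm.trans hl, hlen, hch⟩

theorem avoidsInc_drop {α : Type*} [LT α] {r j : ℕ} {w : List α}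
    (hw : AvoidsInc r w) : AvoidsInc r (w.drop j) :=
  avoidsInc_of_infix (w.drop_suffix j).isInfix hw

theorem avoidsInc_nil {α : Type*} [LT α] : AvoidsInc 3 ([] : List α) := by
  rintro ⟨l, hl, hlen, -⟩
  have h := hl.length_le
  rw [hlen] at h
  simp at h

/-- chain' of a prefix in terms of ascents -/
theorem chain'_take_iff {α : Type*} [LT α] (w : List α) (j : ℕ) (hj : j ≤ w.length) :
    (w.take j).Chain' (· < ·) ↔ ∀ i, i + 1 < j → Asc w i := by
  have hlen : (w.take j).length = j := by
    rw [List.length_take]; omega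
  show List.IsChain _ (w.take j) ↔ _
  rw [List.isChain_iff_getElem]
  constructor
  · intro h i hi
    refine ⟨by omega, ?_⟩
    have := h i (by omega)
    have e0 : (w.take j)[i]'(by omega) = w[i] := List.getElem_take
    have e1 : (w.take j)[i + 1]'(by omega) = w[i + 1] := List.getElem_take
    rwa [e0, e1] at this
  · intro h i hi
    rw [hlen] at hi
    obtain ⟨h1, hlt⟩ := h i (by omega)
    have e0 : (w.take j)[i]'(by rw [hlen]; omega) = w[i] := List.getElem_take
    have e1 : (w.take j)[i + 1]'(by rw [hlen]; omega) = w[i + 1] := List.getElem_take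
    rw [e0, e1]
    exact hlt

/-! ### The coefficient sequence -/

/-- coefficient `c j = 1, -1, 0` according to `j % 3 = 0, 1, 2`. -/
def c (j : ℕ) : ℤ := if j % 3 = 0 then 1 else if j % 3 = 1 then -1 else 0

theorem c_three_consec (j : ℕ) : c j + c (j + 1) + c (j + 2) = 0 := by
  have h : j % 3 = 0 ∨ j % 3 = 1 ∨ j % 3 = 2 := by omega
  rcases h with h | h | h <;>
  · have h1 : (j+1) % 3 = (j % 3 + 1) % 3 := by omega
    have h2 : (j+2) % 3 = (j % 3 + 2) % 3 := by omega
    simp [c, h, h1, h2]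

theorem c_sum_Icc3 (a : ℕ) : ∑ j ∈ Icc a (a + 2), c j = 0 := by
  rw [show a + 2 = (a+1) + 1 by ring, Finset.sum_Icc_succ_top (by omega),
    Finset.sum_Icc_succ_top (by omega), Finset.Icc_self, Finset.sum_singleton]
  exact c_three_consec a

/-! ### The local (per-word) identity -/

open Classical in
theorem inner_sum (w : List ℕ) (hn : 1 ≤ w.length) :
    ∑ j ∈ Icc 0 w.length,
      (if (w.take j).Chain' (· < ·) ∧ AvoidsInc 3 (w.drop j) then c j else 0) = 0 := by
  set n := w.length with hnw
  -- the least index from which the suffix avoids 123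
  have hex : ∃ j, AvoidsInc 3 (w.drop j) := ⟨n, by rw [List.drop_length]; exact avoidsInc_nil⟩
  set d := Nat.find hex with hd
  have hdspec : AvoidsInc 3 (w.drop d) := Nat.find_spec hex
  have hdmin : ∀ j, AvoidsInc 3 (w.drop j) → d ≤ j := fun j h => Nat.find_min' hex h
  have hdmono : ∀ j, d ≤ j → AvoidsInc 3 (w.drop j) := by
    intro j hj
    have e : w.drop j = (w.drop d).drop (j - d) := by
      rw [List.drop_drop]; congr 1; omega
    rw [e]; exact avoidsInc_drop hdspec
  -- the longest increasing prefix
  set t := Nat.findGreatest (fun j => (w.take j).Chain' (· < ·)) n with ht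
  have htle : t ≤ n := Nat.findGreatest_le n
  have htspec : (w.take t).Chain' (· < ·) := by
    have h0 : (fun j => (w.take j).Chain' (· < ·)) 0 := by simp; exact List.isChain_nil
    exact Nat.findGreatest_spec (P := fun j => (w.take j).Chain' (· < ·)) (Nat.zero_le n) h0
  have htmax : ∀ j, j ≤ n → (w.take j).Chain' (· < ·) → j ≤ t :=
    fun j hj h => Nat.le_findGreatest hj h
  have htmono : ∀ j, j ≤ t → (w.take j).Chain' (· < ·) := by
    intro j hj
    have e : w.take j = (w.take t).take j := by
      rw [List.take_take]; congr 1; omega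
    rw [e]; exact htspec.take j
  have hasc : ∀ i, i + 1 < t → Asc w i :=
    (chain'_take_iff w t htle).mp htspec
  have ht1 : 1 ≤ t := htmax 1 hn ((chain'_take_iff w 1 hn).mpr (by omega))
  -- rewrite the summand
  have hsum : ∑ j ∈ Icc 0 n,
      (if (w.take j).Chain' (· < ·) ∧ AvoidsInc 3 (w.drop j) then c j else 0)
      = ∑ j ∈ Icc d t, c j := by
    have hcong : ∀ j ∈ Icc 0 n,
        (if (w.take j).Chain' (· < ·) ∧ AvoidsInc 3 (w.drop j) then c j else 0)
        = (if d ≤ j ∧ j ≤ t then c j else 0) := by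
      intro j hj
      rw [Finset.mem_Icc] at hj
      refine if_congr ?_ rfl rfl
      constructor
      · rintro ⟨h1, h2⟩; exact ⟨hdmin j h2, htmax j hj.2 h1⟩
      · rintro ⟨h1, h2⟩; exact ⟨htmono j h2, hdmono j h1⟩
    rw [Finset.sum_congr rfl hcong, Finset.sum_ite, Finset.sum_const_zero, add_zero]
    apply Finset.sum_congr _ (fun _ _ => rfl)
    ext j
    simp only [Finset.mem_filter, Finset.mem_Icc]
    omega
  rw [hsum]
  by_cases hdt : d ≤ t
  swap
  · rw [Finset.Icc_eq_empty hdt, Finset.sum_empty]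
  rcases Nat.eq_zero_or_pos d with hd0 | hd1
  · -- d = 0 : the whole word avoids, hence t ≤ 2
    have hw : AvoidsInc 3 w := by
      have := hdspec; rw [hd0, List.drop_zero] at this; exact this
    have ht2 : t ≤ 2 := by
      by_contra hc
      push_neg at hc
      exact (avoidsInc_iff_not_bad3 w).mp hw
        ⟨0, hasc 0 (by omega), hasc 1 (by omega)⟩
    rw [hd0]
    have h12 : t = 1 ∨ t = 2 := by omega
    rcases h12 with h1 | h1 <;> rw [h1]
    · rw [show (1 : ℕ) = 0 + 1 from rfl, Finset.sum_Icc_succ_top (by omega),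
        Finset.Icc_self, Finset.sum_singleton]
      norm_num [c]
    · exact c_sum_Icc3 0
  · -- 1 ≤ d ≤ t : then t = d + 2
    have hnotav : ¬ AvoidsInc 3 (w.drop (d - 1)) := Nat.find_min hex (by omega)
    have hb : Bad3 (w.drop (d - 1)) := by
      rwa [avoidsInc_iff_not_bad3, not_not] at hnotav
    have hnb : ¬ Bad3 (w.drop d) := (avoidsInc_iff_not_bad3 _).mp hdspec
    obtain ⟨i, a1, a2⟩ := hb
    rw [asc_drop] at a1 a2
    -- i must be 0
    have hi0 : i = 0 := by
      by_contra hi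
      apply hnb
      refine ⟨i - 1, ?_, ?_⟩
      · rw [asc_drop]
        have e : d + (i - 1) = d - 1 + i := by omega
        rwa [e]
      · rw [asc_drop]
        have e : d + (i - 1 + 1) = d - 1 + (i + 1) := by omega
        rwa [e]
    subst hi0
    have a1' : Asc w (d - 1) := by
      have e : d - 1 + 0 = d - 1 := by omega
      rwa [e] at a1
    have a2' : Asc w d := by
      have e : d - 1 + 0 + 1 = d := by omega
      rwa [e] at a2
    have h3 : d + 2 ≤ n := by
      obtain ⟨hlt, -⟩ := a2'
      omega
    have htd : t = d + 2 := by
      have hup : t ≤ d + 2 := by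
        by_contra hc
        push_neg at hc
        apply hnb
        refine ⟨0, ?_, ?_⟩
        · rw [asc_drop]
          have e : d + 0 = d := by omega
          rw [e]; exact a2'
        · rw [asc_drop]
          have e : d + (0 + 1) = d + 1 := by omega
          rw [e]; exact hasc (d + 1) (by omega)
      have hdown : d + 2 ≤ t := by
        apply htmax _ h3
        rw [chain'_take_iff w _ (by omega)]
        intro i hi
        have hcases : i + 1 < d ∨ i = d - 1 ∨ i = d := by omega
        rcases hcases with hlt | rfl | rfl
        · exact hasc i (by omega)
        · exact a1'
        · exact a2'
      omega
    rw [htd]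
    exact c_sum_Icc3 d

/-! ### Counting machinery -/

/-- The finset of all permutations (as lists) of the elements of `s`. -/
def perms (s : Finset ℕ) : Finset (List ℕ) := (s.sort (· ≤ ·)).permutations.toFinset

theorem coe_sort (s : Finset ℕ) : ((s.sort (· ≤ ·) : List ℕ) : Multiset ℕ) = s.val := by
  rw [← Finset.coe_toList s, Multiset.coe_eq_coe]
  exact Finset.sort_perm_toList s _

theorem mem_perms {s : Finset ℕ} {w : List ℕ} :
    w ∈ perms s ↔ (w : Multiset ℕ) = s.val := by
  rw [perms, List.mem_toFinset, List.mem_permutations, ← Multiset.coe_eq_coe, coe_sort]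

theorem perms_length {s : Finset ℕ} {w : List ℕ} (h : w ∈ perms s) :
    w.length = s.card := by
  have := mem_perms.mp h
  have := congrArg Multiset.card this
  simpa using this

theorem perms_nodup {s : Finset ℕ} {w : List ℕ} (h : w ∈ perms s) : w.Nodup := by
  have := mem_perms.mp h
  have hn : (w : Multiset ℕ).Nodup := by rw [this]; exact s.nodup
  exact hn

open Classical in
/-- number of permutations of `s` (as words) satisfying `p` -/
noncomputable def cnt (p : List ℕ → Prop) (s : Finset ℕ) : ℕ :=
  ((perms s).filter p).card

theorem cnt_eq (p : List ℕ → Prop) [DecidablePred p] (s : Finset ℕ) :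
    cnt p s = ((perms s).filter p).card := by
  unfold cnt
  congr 1
  exact Finset.filter_congr_decidable _ _ _

/-- the number of 123-avoiding permutations of an `n`-set -/
noncomputable def A (n : ℕ) : ℕ := cnt (AvoidsInc 3) (Finset.range n)

theorem asc_map_iff {α β : Type*} [LT α] [LT β] (f : α → β) (w : List α)
    (hf : ∀ a ∈ w, ∀ b ∈ w, (a < b ↔ f a < f b)) (i : ℕ) :
    Asc (w.map f) i ↔ Asc w i := by
  constructor
  · rintro ⟨h, hlt⟩
    have h' : i + 1 < w.length := by simpa using h
    refine ⟨h', ?_⟩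
    rw [List.getElem_map, List.getElem_map] at hlt
    exact (hf _ (List.getElem_mem _) _ (List.getElem_mem _)).mpr hlt
  · rintro ⟨h, hlt⟩
    have h' : i + 1 < (w.map f).length := by simpa using h
    refine ⟨h', ?_⟩
    rw [List.getElem_map, List.getElem_map]
    exact (hf _ (List.getElem_mem _) _ (List.getElem_mem _)).mp hlt

theorem avoid_map_iff {α β : Type*} [LinearOrder α] [LinearOrder β] (f : α → β) (w : List α)
    (hf : ∀ a ∈ w, ∀ b ∈ w, (a < b ↔ f a < f b)) :
    AvoidsInc 3 (w.map f) ↔ AvoidsInc 3 w := by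
  rw [avoidsInc_iff_not_bad3, avoidsInc_iff_not_bad3]
  apply not_congr
  exact exists_congr fun i => and_congr (asc_map_iff f w hf i) (asc_map_iff f w hf (i + 1))

theorem map_inj_of_inj_on {w₁ w₂ : List ℕ} {s : Finset ℕ} (g : ℕ → ℕ)
    (hg : ∀ a ∈ s, ∀ b ∈ s, g a = g b → a = b)
    (h1 : ∀ a ∈ w₁, a ∈ s) (h2 : ∀ a ∈ w₂, a ∈ s)
    (h : w₁.map g = w₂.map g) : w₁ = w₂ := by
  have hlen : w₁.length = w₂.length := by
    have := congrArg List.length h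
    simpa using this
  apply List.ext_getElem hlen
  intro i hi1 hi2
  have := congrArg (fun l => l[i]?) h
  simp only [List.getElem?_map] at this
  rw [List.getElem?_eq_getElem (by simpa using hi1), List.getElem?_eq_getElem
    (by simpa using hi2)] at this
  simp only [Option.map_some] at this
  exact hg _ (h1 _ (List.getElem_mem _)) _ (h2 _ (List.getElem_mem _))
    (by simpa using this)

open Classical in
theorem cnt_le_of (s u : Finset ℕ) (g : ℕ → ℕ)
    (hg : ∀ a ∈ s, ∀ b ∈ s, (a < b ↔ g a < g b))
    (h2 : Multiset.map g s.val = u.val) :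
    cnt (AvoidsInc 3) s ≤ cnt (AvoidsInc 3) u := by
  rw [cnt, cnt]
  have hmemw : ∀ w ∈ perms s, ∀ a ∈ w, a ∈ s := by
    intro w hw a ha
    have := mem_perms.mp hw
    rw [← Finset.mem_val, ← this]
    exact ha
  apply Finset.card_le_card_of_injOn (fun w => w.map g)
  · intro w hw
    rw [Finset.mem_coe, Finset.mem_filter] at hw ⊢
    obtain ⟨hw1, hw2⟩ := hw
    constructor
    · rw [mem_perms, ← Multiset.map_coe, mem_perms.mp hw1, h2]
    · rw [avoid_map_iff g w (fun a ha b hb => hg a (hmemw w hw1 a ha) b (hmemw w hw1 b hb))]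
      exact hw2
  · intro w₁ hw₁ w₂ hw₂ h
    simp only [Finset.coe_filter, Set.mem_setOf_eq] at hw₁ hw₂
    refine map_inj_of_inj_on (s := s) g ?_ (hmemw _ hw₁.1) (hmemw _ hw₂.1) h
    intro a ha b hb hab
    rcases lt_trichotomy a b with hlt | heq | hlt
    · exact absurd ((hg a ha b hb).mp hlt) (by omega)
    · exact heq
    · exact absurd ((hg b hb a ha).mp hlt) (by omega)

theorem cnt_avoid_eq (s : Finset ℕ) : cnt (AvoidsInc 3) s = A s.card := by
  classical
  set k := s.card with hk
  let e := s.orderIsoOfFin (k := k) rfl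
  set g : ℕ → ℕ := fun a => if h : a ∈ s then ((e.symm ⟨a, h⟩ : Fin k) : ℕ) else 0 with hgdef
  set g' : ℕ → ℕ := fun b => if h : b < k then ((e ⟨b, h⟩ : s) : ℕ) else 0 with hg'def
  have hge : ∀ (a : ℕ) (h : a ∈ s), g a = ((e.symm ⟨a, h⟩ : Fin k) : ℕ) := by
    intro a h; simp only [hgdef, dif_pos h]
  have hg'e : ∀ (b : ℕ) (h : b < k), g' b = ((e ⟨b, h⟩ : s) : ℕ) := by
    intro b h; simp only [hg'def, dif_pos h]
  have hsorte : ∀ (i : ℕ) (h : i < (s.sort (· ≤ ·)).length),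
      (s.sort (· ≤ ·))[i] = ((e ⟨i, by simpa [Finset.length_sort] using h⟩ : s) : ℕ) := by
    intro i h
    rw [Finset.coe_orderIsoOfFin_apply, Finset.orderEmbOfFin_apply]
    rfl
  have hg : ∀ a ∈ s, ∀ b ∈ s, (a < b ↔ g a < g b) := by
    intro a ha b hb
    rw [hge a ha, hge b hb]
    have hmk : ((⟨a, ha⟩ : s) < ⟨b, hb⟩) ↔ a < b := Subtype.mk_lt_mk
    rw [← hmk, ← OrderIso.lt_iff_lt e.symm]
    rfl
  have hg' : ∀ a ∈ Finset.range k, ∀ b ∈ Finset.range k, (a < b ↔ g' a < g' b) := by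
    intro a ha b hb
    rw [Finset.mem_range] at ha hb
    rw [hg'e a ha, hg'e b hb]
    constructor
    · intro h
      exact Subtype.coe_lt_coe.mpr (e.lt_iff_lt.mpr (by exact h))
    · intro h
      have := e.lt_iff_lt.mp (Subtype.coe_lt_coe.mp h)
      exact this
  have hlist : (s.sort (· ≤ ·)).map g = List.range k := by
    apply List.ext_getElem
    · simp [Finset.length_sort, hk]
    · intro i hi1 hi2
      have hi : i < (s.sort (· ≤ ·)).length := by simpa using hi1
      rw [List.getElem_map, List.getElem_range]
      rw [hsorte i hi]
      rw [hge _ (Subtype.mem _)]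
      simp
  have hlist' : (List.range k).map g' = s.sort (· ≤ ·) := by
    apply List.ext_getElem
    · simp [Finset.length_sort, hk]
    · intro i hi1 hi2
      have hi : i < k := by simpa using hi1
      rw [List.getElem_map, List.getElem_range, hg'e i hi, hsorte i (by simpa [Finset.length_sort] using hi)]
  have h2 : Multiset.map g s.val = (Finset.range k).val := by
    rw [← coe_sort s, Multiset.map_coe, hlist, Finset.range_val]
    rfl
  have h2' : Multiset.map g' (Finset.range k).val = s.val := by
    rw [Finset.range_val, show (Multiset.range k) = ((List.range k : List ℕ) : Multiset ℕ) from rfl,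
      Multiset.map_coe, hlist', coe_sort]
  have hA : A k = cnt (AvoidsInc 3) (Finset.range k) := rfl
  rw [hA]
  exact le_antisymm (cnt_le_of s (Finset.range k) g hg h2)
    (cnt_le_of (Finset.range k) s g' hg' h2')

theorem cnt_P (n j : ℕ) (hj : j ≤ n) :
    cnt (fun w => (w.take j).Chain' (· < ·) ∧ AvoidsInc 3 (w.drop j)) (Finset.range n)
      = n.choose j * A (n - j) := by
  classical
  rw [cnt_eq]
  rw [Finset.card_eq_sum_card_fiberwise (f := fun w => (w.take j).toFinset)
    (t := (Finset.range n).powersetCard j) ?hfib]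
  case hfib =>
    intro w hw
    rw [Finset.mem_coe, Finset.mem_filter] at hw
    obtain ⟨hw1, -⟩ := hw
    have hlen : w.length = n := by rw [perms_length hw1, Finset.card_range]
    have hnd : (w.take j).Nodup := ((w.take_sublist j)).nodup (perms_nodup hw1)
    rw [Finset.mem_coe, Finset.mem_powersetCard]
    constructor
    · intro x hx
      rw [List.mem_toFinset] at hx
      have hxw : x ∈ w := (w.take_sublist j).mem hx
      have := mem_perms.mp hw1
      rw [← Finset.mem_val, ← this]
      exact hxw
    · rw [List.toFinset_card_of_nodup hnd, List.length_take, hlen]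
      omega
  have hfi : ∀ T ∈ (Finset.range n).powersetCard j,
      ((Finset.filter (fun w => (w.take j).toFinset = T)
        (Finset.filter (fun w => (w.take j).Chain' (· < ·) ∧ AvoidsInc 3 (w.drop j))
          (perms (Finset.range n)))).card = A (n - j)) := by
    intro T hT
    rw [Finset.mem_powersetCard] at hT
    obtain ⟨hTsub, hTcard⟩ := hT
    have hslen : (T.sort (· ≤ ·)).length = j := by rw [Finset.length_sort, hTcard]
    have hcard_sdiff : (Finset.range n \ T).card = n - j := by
      rw [Finset.card_sdiff_of_subset hTsub, Finset.card_range, hTcard]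
    rw [← hcard_sdiff, ← cnt_avoid_eq, cnt_eq]
    -- facts about members of the fiber
    have key : ∀ w, w ∈ perms (Finset.range n) →
        ((w.take j).Chain' (· < ·) ∧ AvoidsInc 3 (w.drop j)) →
        (w.take j).toFinset = T →
        w.take j = T.sort (· ≤ ·) ∧ ((w.drop j : List ℕ) : Multiset ℕ) = (Finset.range n \ T).val := by
      intro w hw1 hw2 hw3
      have hnd : (w.take j).Nodup := ((w.take_sublist j)).nodup (perms_nodup hw1)
      have htcoe : ((w.take j : List ℕ) : Multiset ℕ) = T.val := by
        rw [← hw3]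
        have h1 : (w.take j).toFinset.val = ((w.take j : List ℕ) : Multiset ℕ).dedup :=
          Multiset.toFinset_val _
        rw [h1, Multiset.dedup_eq_self.mpr (Multiset.coe_nodup.mpr hnd)]
      have htake : w.take j = T.sort (· ≤ ·) := by
        apply List.Perm.eq_of_pairwise' (r := (· ≤ ·))
        · exact List.Pairwise.imp le_of_lt (List.isChain_iff_pairwise.mp hw2.1)
        · exact Finset.pairwise_sort _ _
        · rw [← Multiset.coe_eq_coe, htcoe, coe_sort]
      refine ⟨htake, ?_⟩
      have hsplit : ((w.take j : List ℕ) : Multiset ℕ) + ((w.drop j : List ℕ) : Multiset ℕ)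
          = (Finset.range n).val := by
        rw [Multiset.coe_add, List.take_append_drop]
        exact mem_perms.mp hw1
      rw [htcoe] at hsplit
      rw [Finset.sdiff_val, ← hsplit, add_tsub_cancel_left]
    apply Finset.card_bij' (i := fun w _ => w.drop j)
      (j := fun σ _ => T.sort (· ≤ ·) ++ σ)
    · -- maps into target
      intro w hw
      rw [Finset.mem_filter] at hw
      obtain ⟨hw12, hw3⟩ := hw
      rw [Finset.mem_filter] at hw12
      obtain ⟨hw1, hw2⟩ := hw12
      obtain ⟨-, hdropcoe⟩ := key w hw1 hw2 hw3
      rw [Finset.mem_filter]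
      exact ⟨mem_perms.mpr hdropcoe, hw2.2⟩
    · -- reverse maps into source
      intro σ hσ
      rw [Finset.mem_filter] at hσ
      obtain ⟨hσ1, hσ2⟩ := hσ
      have htk : (T.sort (· ≤ ·) ++ σ).take j = T.sort (· ≤ ·) := by
        rw [← hslen, List.take_left]
      have hdp : (T.sort (· ≤ ·) ++ σ).drop j = σ := by
        rw [← hslen, List.drop_left]
      rw [Finset.mem_filter, Finset.mem_filter]
      refine ⟨⟨?_, ?_, ?_⟩, ?_⟩
      · rw [mem_perms, ← Multiset.coe_add, coe_sort, mem_perms.mp hσ1, Finset.sdiff_val,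
          add_tsub_cancel_of_le (Finset.val_le_iff.mpr hTsub)]
      · rw [htk]
        exact List.isChain_iff_pairwise.mpr (Finset.sortedLT_sort T).pairwise
      · rw [hdp]
        exact hσ2
      · rw [htk, Finset.sort_toFinset]
    · -- left inverse
      intro w hw
      rw [Finset.mem_filter] at hw
      obtain ⟨hw12, hw3⟩ := hw
      rw [Finset.mem_filter] at hw12
      obtain ⟨hw1, hw2⟩ := hw12
      obtain ⟨htake, -⟩ := key w hw1 hw2 hw3
      rw [← htake, List.take_append_drop]
    · -- right inverse
      intro σ hσ
      rw [← hslen, List.drop_left]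
  rw [Finset.sum_congr rfl hfi, Finset.sum_const, Finset.card_powersetCard,
    Finset.card_range, smul_eq_mul]

theorem main_identity (n : ℕ) (hn : 1 ≤ n) :
    ∑ j ∈ Icc 0 n, c j * ((n.choose j * A (n - j) : ℕ) : ℤ) = 0 := by
  classical
  have h1 : ∀ j ∈ Icc 0 n, c j * ((n.choose j * A (n - j) : ℕ) : ℤ)
      = ∑ w ∈ perms (Finset.range n),
          (if (w.take j).Chain' (· < ·) ∧ AvoidsInc 3 (w.drop j) then c j else 0) := by
    intro j hj
    rw [Finset.mem_Icc] at hj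
    rw [← cnt_P n j hj.2, cnt_eq, Finset.card_filter]
    push_cast
    rw [Finset.mul_sum]
    apply Finset.sum_congr rfl
    intro w hw
    by_cases h : (w.take j).Chain' (· < ·) ∧ AvoidsInc 3 (w.drop j)
    · rw [if_pos h, if_pos h, mul_one]
    · rw [if_neg h, if_neg h, mul_zero]
  rw [Finset.sum_congr rfl h1, Finset.sum_comm]
  apply Finset.sum_eq_zero
  intro w hw
  have hlen : w.length = n := by rw [perms_length hw, Finset.card_range]
  have := inner_sum w (by omega)
  rw [hlen] at this
  exact this

theorem permAvoidCount_eq_A (n : ℕ) : permAvoidCount 3 n = A n := by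
  classical
  rw [permAvoidCount, Nat.card_eq_fintype_card, Fintype.card_subtype, A, cnt_eq]
  have hmemv : ∀ w ∈ perms (Finset.range n), ∀ a ∈ w, a < n := by
    intro w hw a ha
    have := mem_perms.mp hw
    have : a ∈ (Finset.range n) := by rw [← Finset.mem_val, ← this]; exact ha
    rwa [Finset.mem_range] at this
  apply Finset.card_bij
    (i := fun (π : Equiv.Perm (Fin n)) (_ : π ∈ Finset.filter
      (fun π : Equiv.Perm (Fin n) => AvoidsInc 3 ((List.finRange n).map ⇑π)) Finset.univ) =>
        ((List.finRange n).map ⇑π).map Fin.val)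
  · -- maps into target
    intro π hπ
    rw [Finset.mem_filter] at hπ
    rw [Finset.mem_filter]
    have hnd : (((List.finRange n).map ⇑π).map Fin.val).Nodup :=
      (((List.nodup_finRange n).map (Equiv.injective π)).map Fin.val_injective)
    constructor
    · rw [mem_perms]
      have hperm : (((List.finRange n).map ⇑π).map Fin.val).Perm (List.range n) := by
        rw [List.perm_ext_iff_of_nodup hnd List.nodup_range]
        intro a
        constructor
        · intro ha
          obtain ⟨b, -, rfl⟩ := List.mem_map.mp ha
          exact List.mem_range.mpr b.isLt
        · intro ha
          have ha' : a < n := List.mem_range.mp ha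
          refine List.mem_map.mpr ⟨π (π.symm ⟨a, ha'⟩), ?_, by simp⟩
          exact List.mem_map.mpr ⟨π.symm ⟨a, ha'⟩, List.mem_finRange _, rfl⟩
      have : (Finset.range n).val = ((List.range n : List ℕ) : Multiset ℕ) := rfl
      rw [this, Multiset.coe_eq_coe]
      exact hperm
    · rw [avoid_map_iff Fin.val _ (fun a _ b _ => Iff.rfl)]
      exact hπ.2
  · -- injective
    intro π₁ h₁ π₂ h₂ h
    rw [List.map_map, List.map_map] at h
    rw [← List.ofFn_eq_map, ← List.ofFn_eq_map] at h
    have := List.ofFn_inj.mp h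
    apply Equiv.ext
    intro i
    exact Fin.val_injective (congrFun this i)
  · -- surjective
    intro v hv
    rw [Finset.mem_filter] at hv
    obtain ⟨hv1, hv2⟩ := hv
    have hlen : v.length = n := by rw [perms_length hv1, Finset.card_range]
    have hvm : ∀ (i : ℕ) (h : i < n), v[i]'(by omega) < n := by
      intro i h
      exact hmemv v hv1 _ (List.getElem_mem _)
    set f : Fin n → Fin n := fun i => ⟨v[(i : ℕ)]'(by omega), hvm _ i.isLt⟩ with hf
    have hfinj : Function.Injective f := by
      intro i j hij
      have : v[(i : ℕ)]'(by omega) = v[(j : ℕ)]'(by omega) := congrArg Fin.val hij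
      have := ((perms_nodup hv1).getElem_inj_iff).mp this
      exact Fin.ext this
    refine ⟨Equiv.ofBijective f (Finite.injective_iff_bijective.mp hfinj),
      by rw [Finset.mem_filter]
         refine ⟨Finset.mem_univ _, ?_⟩
         rw [← avoid_map_iff Fin.val _ (fun a _ b _ => Iff.rfl)]
         have he : (((List.finRange n).map ⇑(Equiv.ofBijective f
            (Finite.injective_iff_bijective.mp hfinj))).map Fin.val) = v := by
           apply List.ext_getElem (by simp [hlen])
           intro i h1 h2
           simp only [List.getElem_map, List.getElem_finRange]
           rfl
         rw [he]
         exact hv2, ?_⟩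
    apply List.ext_getElem (by simp [hlen])
    intro i h1 h2
    simp only [List.getElem_map, List.getElem_finRange]
    rfl

/-- Reindexing: the alternating sum with coefficients `c` groups into blocks of 3. -/
theorem G_lemma (X : ℕ → ℤ) (k : ℕ) :
    ∑ j ∈ Finset.range (3*k+2), c j * X j
      = ∑ m ∈ Finset.range (k+1), (X (3*m) - X (3*m+1)) := by
  induction k with
  | zero =>
    rw [show 3*0+2 = 0+1+1 from rfl, Finset.sum_range_succ, Finset.sum_range_succ,
      Finset.sum_range_zero, show 0+1 = 1 from rfl, Finset.sum_range_one]
    norm_num [c]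
    ring
  | succ k ih =>
    rw [show 3*(k+1)+2 = (3*k+2)+1+1+1 from by ring, Finset.sum_range_succ,
      Finset.sum_range_succ, Finset.sum_range_succ, ih]
    have c2 : c (3*k+2) = 0 := by
      have h : (3*k+2) % 3 = 2 := by omega
      simp [c, h]
    have c3 : c (3*k+2+1) = 1 := by
      have h : (3*k+2+1) % 3 = 0 := by omega
      simp [c, h]
    have c4 : c (3*k+2+1+1) = -1 := by
      have h : (3*k+2+1+1) % 3 = 1 := by omega
      simp [c, h]
    rw [c2, c3, c4,
      Finset.sum_range_succ (fun m => X (3*m) - X (3*m+1)) (k+1)]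
    simp only [show 3*k+2+1 = 3*k+3 from by omega, show 3*k+2+1+1 = 3*k+4 from by omega,
      show 3*(k+1) = 3*k+3 from by omega, show 3*(k+1)+1 = 3*k+4 from by omega]
    ring

end PA123

open PA123 in
theorem perm_avoid_123_recurrence :
    permAvoidCount 3 0 = 1 ∧
    ∀ n : ℕ, 1 ≤ n →
      (permAvoidCount 3 n : ℤ) =
        n * permAvoidCount 3 (n - 1) +
          ∑ m ∈ Finset.Icc 1 n,
            (-(n.choose (3 * m) : ℤ) * permAvoidCount 3 (n - 3 * m) +
              (n.choose (3 * m + 1) : ℤ) * permAvoidCount 3 (n - 3 * m - 1)) := by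
  classical
  constructor
  · rw [permAvoidCount_eq_A]
    have hperms : perms (Finset.range 0) = {([] : List ℕ)} := by
      rw [perms, Finset.range_zero, Finset.sort_empty, List.permutations_nil]
      rfl
    rw [A, cnt_eq, hperms, Finset.filter_singleton, if_pos avoidsInc_nil,
      Finset.card_singleton]
  · intro n hn
    simp only [permAvoidCount_eq_A]
    -- abbreviation
    have hIcc : Finset.Icc 0 n = Finset.range (n+1) := by
      ext x; simp [Finset.mem_Icc, Finset.mem_range]
    set f : ℕ → ℤ := fun j => ((n.choose j : ℕ) : ℤ) * ((A (n - j) : ℕ) : ℤ) with hf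
    have h0 : ∑ j ∈ Finset.range (n+1), c j * f j = 0 := by
      have hm := main_identity n hn
      rw [hIcc] at hm
      rw [← hm]
      apply Finset.sum_congr rfl
      intro j hj
      rw [hf]
      push_cast
      ring
    have h1 : ∑ j ∈ Finset.range (3*n+2), c j * f j
        = ∑ j ∈ Finset.range (n+1), c j * f j := by
      symm
      apply Finset.sum_subset
      · intro x hx
        simp only [Finset.mem_range] at hx ⊢
        omega
      · intro j hj hj'
        simp only [Finset.mem_range] at hj hj'
        have hlt : n < j := by omega
        have : f j = 0 := by
          rw [hf]
          simp [Nat.choose_eq_zero_of_lt hlt]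
        rw [this, mul_zero]
    have h2 := G_lemma f n
    have h3 : ∑ m ∈ Finset.range (n+1), (f (3*m) - f (3*m+1)) = 0 := by
      rw [← h2, h1, h0]
    rw [Finset.sum_range_succ'] at h3
    -- h3 : ∑ i ∈ range n, (f (3*(i+1)) - f (3*(i+1)+1)) + (f (3*0) - f (3*0+1)) = 0
    have hf0 : f 0 = (A n : ℤ) := by
      rw [hf]; simp
    have hf1 : f 1 = (n : ℤ) * (A (n-1) : ℤ) := by
      rw [hf]; simp [Nat.choose_one_right]
    have hsum : ∑ m ∈ Finset.Icc 1 n,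
        (-(n.choose (3 * m) : ℤ) * (A (n - 3 * m) : ℤ) +
          (n.choose (3 * m + 1) : ℤ) * (A (n - 3 * m - 1) : ℤ))
        = ∑ i ∈ Finset.range n, (-(f (3*(i+1))) + f (3*(i+1)+1)) := by
      rw [← Finset.Ico_add_one_right_eq_Icc, Finset.sum_Ico_eq_sum_range]
      apply Finset.sum_congr (by norm_num)
      intro i hi
      have e : 1 + i = i + 1 := by omega
      rw [e, hf]
      have e2 : n - 3 * (i+1) - 1 = n - (3 * (i+1) + 1) := by omega
      rw [e2]
      push_cast
      ring
    rw [hsum]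
    have hexp : ∑ i ∈ Finset.range n, (-(f (3*(i+1))) + f (3*(i+1)+1))
        = -∑ i ∈ Finset.range n, (f (3*(i+1)) - f (3*(i+1)+1)) := by
      rw [← Finset.sum_neg_distrib]
      apply Finset.sum_congr rfl
      intro i hi
      ring
    rw [hexp]
    have h30 : (3*0 : ℕ) = 0 := by norm_num
    have h31 : (3*0+1 : ℕ) = 1 := by norm_num
    rw [h30, h31, hf0, hf1] at h3
    linarith [h3]
end

section
/- For r ≥ 2, the number a_r(n) of permutations of {1,...,n} avoiding the consecutive pattern 12...r (no r consecutive increasing entries) satisfies a_r(n) = n·a_r(n-1) + Σ_{m≥1} [ -C(n,mr)·a_r(n-mr) + C(n,mr+1)·a_r(n-mr-1) ], with a_r(0)=1 and a_r(k)=0 for k<0. -/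
open List Finset
set_option linter.unusedSectionVars false
set_option maxHeartbeats 800000
attribute [local instance 0] Classical.propDecidable

section Part1
variable {α : Type*} [LinearOrder α] {r : ℕ} {w : List α}

lemma infix_drop_take (w : List α) (i m : ℕ) : (w.drop i).take m <:+: w :=
  ((w.drop i).take_prefix m).isInfix.trans (w.drop_suffix i).isInfix

lemma chain'_factor_iff (w : List α) (i m : ℕ) (him : i + m ≤ w.length) :
    ((w.drop i).take m).Chain' (· < ·) ↔
      ∀ t, (h : t + 1 < m) → w[i+t]'(by omega) < w[i+t+1]'(by omega) := by
  rw [List.Chain', List.isChain_iff_getElem]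
  have hl : ((w.drop i).take m).length = m := by simp; omega
  constructor
  · intro H t ht
    have := H t (by omega)
    simpa [List.getElem_take, List.getElem_drop, Nat.add_assoc] using this
  · intro H t ht
    rw [hl] at ht
    have := H t (by omega)
    simpa [List.getElem_take, List.getElem_drop, Nat.add_assoc] using this

lemma avoidsInc_iff (hr : 1 ≤ r) (w : List α) :
    AvoidsInc r w ↔ ∀ i, (hi : i + r ≤ w.length) →
      ∃ t, ∃ _h : t + 1 < r, ¬ (w[i+t]'(by omega) < w[i+t+1]'(by omega)) := by
  constructor
  · intro H i hi
    by_contra hc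
    push_neg at hc
    exact H ⟨(w.drop i).take r, infix_drop_take w i r, by simp; omega,
      (chain'_factor_iff w i r hi).2 (fun t ht => hc t ht)⟩
  · rintro H ⟨l, ⟨s, t, hst⟩, hlen, hch⟩
    have hi : s.length + r ≤ w.length := by
      rw [← hst]; simp; omega
    have hl : l = (w.drop s.length).take r := by
      rw [← hst, List.append_assoc, List.drop_left, ← hlen, List.take_left]
    obtain ⟨u, hu1, hu2⟩ := H s.length hi
    rw [hl] at hch
    exact hu2 ((chain'_factor_iff w s.length r hi).1 hch u hu1)

lemma chain'_take_iff (w : List α) (k : ℕ) (hk : k ≤ w.length) :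
    (w.take k).Chain' (· < ·) ↔
      ∀ t, (h : t + 1 < k) → w[t]'(by omega) < w[t+1]'(by omega) := by
  have := chain'_factor_iff w 0 k (by omega)
  simpa using this

lemma AvoidsInc.drop (h : AvoidsInc r w) (k : ℕ) : AvoidsInc r (w.drop k) := by
  rintro ⟨l, hl, h1, h2⟩
  exact h ⟨l, hl.trans (w.drop_suffix k).isInfix, h1, h2⟩

lemma avoidsInc_of_short (hw : w.length < r) : AvoidsInc r w := by
  rintro ⟨l, hl, h1, h2⟩
  have := hl.length_le
  omega

lemma avoidsInc_map_iff {β : Type*} [LinearOrder β] {g : α → β} (hg : StrictMono g)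
    (hr : 1 ≤ r) (w : List α) : AvoidsInc r (w.map g) ↔ AvoidsInc r w := by
  rw [avoidsInc_iff hr, avoidsInc_iff hr]
  simp only [List.length_map, List.getElem_map]
  constructor
  · intro H i hi
    obtain ⟨t, ht, h2⟩ := H i hi
    exact ⟨t, ht, fun hlt => h2 (hg hlt)⟩
  · intro H i hi
    obtain ⟨t, ht, h2⟩ := H i hi
    exact ⟨t, ht, fun hlt => h2 (hg.lt_iff_lt.1 hlt)⟩

end Part1

section Part2
variable {α : Type*} [LinearOrder α] {r : ℕ} {w : List α}

/-- A valid cut point. -/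
def ValidCut (r j : ℕ) (w : List α) : Prop :=
  (w.take j).Chain' (· < ·) ∧ AvoidsInc r (w.drop j)

lemma avoid_drop_iff (hr : 1 ≤ r) (j : ℕ) (hj : j ≤ w.length) :
    AvoidsInc r (w.drop j) ↔ ∀ p, (hp : j + p + r ≤ w.length) →
      ∃ t, ∃ _h : t + 1 < r, ¬ (w[j+p+t]'(by omega) < w[j+p+t+1]'(by omega)) := by
  rw [avoidsInc_iff hr]
  simp only [List.getElem_drop, List.length_drop]
  constructor
  · intro H p hp
    obtain ⟨t, ht, h2⟩ := H p (by omega)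
    refine ⟨t, ht, ?_⟩
    simpa only [← Nat.add_assoc] using h2
  · intro H p hp
    obtain ⟨t, ht, h2⟩ := H p (by omega)
    refine ⟨t, ht, ?_⟩
    simpa only [← Nat.add_assoc] using h2

lemma mod_add_le {a b : ℕ} (hr : 0 < r) (h : a % r = b % r) (hab : a < b) : a + r ≤ b := by
  have ha := Nat.div_add_mod a r
  have hb := Nat.div_add_mod b r
  have h1 : a / r < b / r := by
    rcases Nat.lt_or_ge (a / r) (b / r) with h' | h'
    · exact h'
    · exfalso
      have := Nat.mul_le_mul_left r h'
      omega
  have := Nat.mul_le_mul_left r (Nat.succ_le_of_lt h1)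
  rw [Nat.mul_succ] at this
  omega

lemma validCut_far (hr : 2 ≤ r) {j j' : ℕ} (hj' : j' ≤ w.length)
    (h1 : ValidCut r j w) (h2 : ValidCut r j' w) (hlt : j + r ≤ j') : False := by
  obtain ⟨t, ht, hnt⟩ := (avoid_drop_iff (by omega) j (by omega)).1 h1.2 0 (by omega)
  exact hnt ((chain'_take_iff w j' hj').1 h2.1 (j + 0 + t) (by omega))

lemma exists_one_of_zero (hr : 2 ≤ r) (hn : 1 ≤ w.length) {j : ℕ} (hj : j ≤ w.length)
    (hjr : j % r = 0) (hv : ValidCut r j w) :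
    ∃ j', j' ≤ w.length ∧ j' % r = 1 ∧ ValidCut r j' w := by
  have h1r : (1 : ℕ) % r = 1 := Nat.mod_eq_of_lt (by omega)
  by_cases hca : j < w.length ∧ (w.take (j+1)).Chain' (· < ·)
  · refine ⟨j + 1, by omega, ?_, hca.2, ?_⟩
    · rw [Nat.add_mod, hjr, Nat.zero_add, h1r, h1r]
    · have : w.drop (j+1) = (w.drop j).drop 1 := by
        rw [List.drop_drop]
      rw [this]
      exact hv.2.drop 1
  · have hca' : j < w.length → ¬ (w.take (j+1)).Chain' (· < ·) := fun h1 h2 => hca ⟨h1, h2⟩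
    have hj0 : j ≠ 0 := by
      rintro rfl
      exact hca' (by omega) ((chain'_take_iff w 1 (by omega)).2 (fun t ht => by omega))
    have hdvd : r ∣ j := Nat.dvd_of_mod_eq_zero hjr
    have hjr' : r ≤ j := Nat.le_of_dvd (by omega) hdvd
    refine ⟨j - r + 1, by omega, ?_, ?_, ?_⟩
    · obtain ⟨q, rfl⟩ := hdvd
      have hq : q ≠ 0 := by rintro rfl; simp at hj0
      have he : r * q - r + 1 = r * (q - 1) + 1 := by
        rw [Nat.mul_sub, Nat.mul_one]
      rw [he, Nat.mul_add_mod, h1r]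
    · rw [chain'_take_iff w _ (by omega)]
      intro t ht
      exact (chain'_take_iff w j hj).1 hv.1 t (by omega)
    · rw [avoid_drop_iff (by omega) _ (by omega)]
      intro p hp
      by_cases hge : j ≤ j - r + 1 + p
      · obtain ⟨t, ht, hnt⟩ :=
          (avoid_drop_iff (by omega) j hj).1 hv.2 (j - r + 1 + p - j) (by omega)
        refine ⟨t, ht, ?_⟩
        have e : j + (j - r + 1 + p - j) = j - r + 1 + p := by omega
        simpa only [e] using hnt
      · have hjn : j < w.length := by omega
        have hnj : ¬ (w[j-1]'(by omega) < w[j]'(by omega)) := by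
          intro hlt
          apply hca' hjn
          rw [chain'_take_iff w (j+1) (by omega)]
          intro t ht
          by_cases htj : t + 1 < j
          · exact (chain'_take_iff w j hj).1 hv.1 t htj
          · have e1 : j - 1 = t := by omega
            simp only [e1] at hlt
            have e2 : j = t + 1 := by omega
            simp only [e2] at hlt
            exact hlt
        refine ⟨j - 1 - (j - r + 1 + p), by omega, ?_⟩
        have e1 : j - r + 1 + p + (j - 1 - (j - r + 1 + p)) = j - 1 := by omega
        have e2 : j - 1 + 1 = j := by omega
        simpa only [e1, e2] using hnj

lemma exists_zero_of_one (hr : 2 ≤ r) {j : ℕ} (hj : j ≤ w.length)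
    (hjr : j % r = 1) (hv : ValidCut r j w) :
    ∃ j', j' ≤ w.length ∧ j' % r = 0 ∧ ValidCut r j' w := by
  have hj1 : 1 ≤ j := by
    rcases Nat.eq_zero_or_pos j with rfl | h
    · rw [Nat.zero_mod] at hjr; omega
    · exact h
  have hmod : (j - 1) % r = 0 := by
    have := Nat.div_add_mod j r
    have e : j - 1 = r * (j / r) := by omega
    rw [e, Nat.mul_mod_right]
  by_cases hA : AvoidsInc r (w.drop (j - 1))
  · refine ⟨j - 1, by omega, hmod, ?_, hA⟩
    rw [chain'_take_iff w _ (by omega)]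
    intro t ht
    exact (chain'_take_iff w j hj).1 hv.1 t (by omega)
  · have hlen : j - 1 + r ≤ w.length := by
      by_contra h
      exact hA (avoidsInc_of_short (by simp; omega))
    -- extract the increasing window starting at j - 1
    have hW : ∀ t, (h : t + 1 < r) → w[j-1+t]'(by omega) < w[j-1+t+1]'(by omega) := by
      rw [avoid_drop_iff (by omega) (j-1) (by omega)] at hA
      push_neg at hA
      obtain ⟨p, hp, hA⟩ := hA
      rcases Nat.eq_zero_or_pos p with rfl | hppos
      · intro t ht
        have := hA t ht
        simpa only [Nat.add_zero] using this
      · exfalso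
        obtain ⟨t, ht, hnt⟩ := (avoid_drop_iff (by omega) j hj).1 hv.2 (p - 1) (by omega)
        apply hnt
        have e : j + (p - 1) = j - 1 + p := by omega
        have := hA t ht
        simpa only [e] using this
    refine ⟨j - 1 + r, by omega, by rw [Nat.add_mod_right, hmod], ?_, ?_⟩
    · rw [chain'_take_iff w _ (by omega)]
      intro t ht
      by_cases htj : t + 1 < j
      · exact (chain'_take_iff w j hj).1 hv.1 t htj
      · have e : j - 1 + (t - (j - 1)) = t := by omega
        have := hW (t - (j - 1)) (by omega)
        simpa only [e] using this
    · rw [avoid_drop_iff (by omega) _ (by omega)]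
      intro p hp
      obtain ⟨t, ht, hnt⟩ := (avoid_drop_iff (by omega) j hj).1 hv.2 (r - 1 + p) (by omega)
      refine ⟨t, ht, ?_⟩
      have e : j + (r - 1 + p) = j - 1 + r + p := by omega
      simpa only [e] using hnt

/-- The per-word signed-count identity. -/
lemma card_valid_eq (hr : 2 ≤ r) (hn : 1 ≤ w.length) :
    ((Finset.range (w.length + 1)).filter (fun j => j % r = 0 ∧ ValidCut r j w)).card =
    ((Finset.range (w.length + 1)).filter (fun j => j % r = 1 ∧ ValidCut r j w)).card := by
  classical
  have hle : ∀ c : ℕ, ((Finset.range (w.length + 1)).filter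
      (fun j => j % r = c ∧ ValidCut r j w)).card ≤ 1 := by
    intro c
    rw [Finset.card_le_one]
    intro a ha b hb
    simp only [Finset.mem_filter, Finset.mem_range] at ha hb
    by_contra hne
    rcases Nat.lt_or_ge a b with h | h
    · exact validCut_far hr (by omega : b ≤ w.length) ha.2.2 hb.2.2
        (mod_add_le (by omega) (ha.2.1.trans hb.2.1.symm) h)
    · have h' : b < a := by omega
      exact validCut_far hr (by omega : a ≤ w.length) hb.2.2 ha.2.2
        (mod_add_le (by omega) (hb.2.1.trans ha.2.1.symm) h')
  have hiff : ((Finset.range (w.length + 1)).filter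
      (fun j => j % r = 0 ∧ ValidCut r j w)).Nonempty ↔
      ((Finset.range (w.length + 1)).filter
      (fun j => j % r = 1 ∧ ValidCut r j w)).Nonempty := by
    constructor
    · rintro ⟨j, hj⟩
      simp only [Finset.mem_filter, Finset.mem_range] at hj
      obtain ⟨j', h1, h2, h3⟩ := exists_one_of_zero hr hn (by omega) hj.2.1 hj.2.2
      exact ⟨j', by simp only [Finset.mem_filter, Finset.mem_range]; exact ⟨by omega, h2, h3⟩⟩
    · rintro ⟨j, hj⟩
      simp only [Finset.mem_filter, Finset.mem_range] at hj
      obtain ⟨j', h1, h2, h3⟩ := exists_zero_of_one hr (by omega) hj.2.1 hj.2.2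
      exact ⟨j', by simp only [Finset.mem_filter, Finset.mem_range]; exact ⟨by omega, h2, h3⟩⟩
  rcases ((Finset.range (w.length + 1)).filter
      (fun j => j % r = 0 ∧ ValidCut r j w)).eq_empty_or_nonempty with he | hne
  · rw [he]
    have : ¬ ((Finset.range (w.length + 1)).filter
        (fun j => j % r = 1 ∧ ValidCut r j w)).Nonempty := by
      rw [← hiff, he]; simp
    rw [Finset.not_nonempty_iff_eq_empty] at this
    rw [this]
  · have h1 := hne.card_pos
    have h2 := (hiff.1 hne).card_pos
    have := hle 0
    have := hle 1
    omega

end Part2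

section Part3
variable {r : ℕ}

noncomputable def allWords (γ : Type*) [LinearOrder γ] [Fintype γ] : Finset (List γ) :=
  ((Finset.univ : Finset γ).sort (· ≤ ·)).permutations.toFinset

variable {γ : Type*} [LinearOrder γ] [Fintype γ]

lemma mem_allWords {w : List γ} :
    w ∈ allWords γ ↔ w ~ ((Finset.univ : Finset γ).sort (· ≤ ·)) := by
  simp [allWords, List.mem_permutations]

lemma length_of_mem_allWords {w : List γ} (h : w ∈ allWords γ) :
    w.length = Fintype.card γ := by
  rw [mem_allWords] at h
  rw [h.length_eq, Finset.length_sort, Finset.card_univ]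

lemma nodup_of_mem_allWords {w : List γ} (h : w ∈ allWords γ) : w.Nodup := by
  rw [mem_allWords] at h
  exact h.nodup_iff.2 (Finset.sort_nodup _ _)

lemma mem_of_mem_allWords {w : List γ} (h : w ∈ allWords γ) (x : γ) : x ∈ w := by
  rw [mem_allWords] at h
  rw [h.mem_iff, Finset.mem_sort]
  exact Finset.mem_univ x

lemma perm_allWords {w : List γ} (hn : w.Nodup) (hall : ∀ x : γ, x ∈ w) :
    w ∈ allWords γ := by
  rw [mem_allWords]
  apply List.perm_of_nodup_nodup_toFinset_eq hn (Finset.sort_nodup _ _)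
  rw [Finset.sort_toFinset]
  apply Finset.eq_univ_of_forall
  intro x
  simpa using hall x

lemma permAvoidCount_eq (r n : ℕ) :
    permAvoidCount r n = ((allWords (Fin n)).filter (fun w => AvoidsInc r w)).card := by
  rw [permAvoidCount, Nat.card_eq_fintype_card, Fintype.card_subtype]
  apply Finset.card_bij (fun (π : Equiv.Perm (Fin n)) _ => (List.finRange n).map ⇑π)
  · intro π hπ
    simp only [Finset.mem_filter, Finset.mem_univ, true_and] at hπ
    rw [Finset.mem_filter]
    refine ⟨?_, hπ⟩
    apply perm_allWords
    · exact (List.nodup_finRange n).map π.injective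
    · intro x
      rw [List.mem_map]
      exact ⟨π.symm x, List.mem_finRange _, π.apply_symm_apply x⟩
  · intro a _ b _ h
    rw [List.map_inj_left] at h
    exact Equiv.ext (fun i => h i (List.mem_finRange i))
  · intro w hw
    rw [Finset.mem_filter] at hw
    have hlen : w.length = n := (length_of_mem_allWords hw.1).trans (Fintype.card_fin n)
    have hinj : Function.Injective (fun i : Fin n => w.get (Fin.cast hlen.symm i)) := by
      intro i j hij
      have h2 := List.nodup_iff_injective_get.1 (nodup_of_mem_allWords hw.1) hij
      simpa [Fin.ext_iff] using h2
    refine ⟨Equiv.ofBijective _ ((Finite.injective_iff_bijective).1 hinj), ?_, ?_⟩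
    · simp only [Finset.mem_filter, Finset.mem_univ, true_and]
      have he : (List.finRange n).map ⇑(Equiv.ofBijective _
          ((Finite.injective_iff_bijective).1 hinj)) = w := by
        apply List.ext_getElem (by simpa using hlen.symm)
        intro i h1 h2
        simp [List.getElem_map, Equiv.ofBijective_apply, List.get_eq_getElem, Fin.coe_cast]
      rw [he]
      exact hw.2
    · apply List.ext_getElem (by simpa using hlen.symm)
      intro i h1 h2
      simp [List.getElem_map, Equiv.ofBijective_apply, List.get_eq_getElem, Fin.coe_cast]

lemma mem_attachWith {α : Type*} {l : List α} {p : α → Prop} {H : ∀ a ∈ l, p a}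
    {x : {a // p a}} : x ∈ l.attachWith p H ↔ x.val ∈ l := by
  constructor
  · intro h
    have := List.mem_map_of_mem (f := Subtype.val) h
    rwa [List.attachWith_map_subtype_val] at this
  · intro h
    have : x.val ∈ (l.attachWith p H).map Subtype.val := by
      rwa [List.attachWith_map_subtype_val]
    obtain ⟨y, hy, he⟩ := List.mem_map.1 this
    exact (Subtype.ext he : y = x) ▸ hy

lemma card_avoid_transfer {δ : Type*} [LinearOrder δ] [Fintype δ] (e : γ ≃o δ) (hr : 1 ≤ r) :
    ((allWords γ).filter (fun w => AvoidsInc r w)).card =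
    ((allWords δ).filter (fun w => AvoidsInc r w)).card := by
  apply Finset.card_bij (fun (w : List γ) _ => w.map ⇑e)
  · intro w hw
    rw [Finset.mem_filter] at hw ⊢
    refine ⟨perm_allWords ((nodup_of_mem_allWords hw.1).map e.injective) ?_,
      (avoidsInc_map_iff e.strictMono hr w).2 hw.2⟩
    intro x
    rw [List.mem_map]
    exact ⟨e.symm x, mem_of_mem_allWords hw.1 _, e.apply_symm_apply x⟩
  · intro a _ b _ h
    exact List.map_injective_iff.2 e.injective h
  · intro u hu
    rw [Finset.mem_filter] at hu
    refine ⟨u.map ⇑e.symm, ?_, ?_⟩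
    · rw [Finset.mem_filter]
      refine ⟨perm_allWords ((nodup_of_mem_allWords hu.1).map e.symm.injective) ?_,
        (avoidsInc_map_iff e.symm.strictMono hr u).2 hu.2⟩
      intro x
      rw [List.mem_map]
      exact ⟨e x, mem_of_mem_allWords hu.1 _, e.symm_apply_apply x⟩
    · rw [List.map_map]
      have he : ⇑e ∘ ⇑e.symm = id := by ext x; simp
      rw [he, List.map_id]

lemma card_avoid_finset {α : Type*} [LinearOrder α] (r : ℕ) (hr : 1 ≤ r) (T : Finset α) :
    ((allWords {x // x ∈ T}).filter (fun w => AvoidsInc r w)).card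
      = permAvoidCount r T.card := by
  rw [permAvoidCount_eq]
  exact (card_avoid_transfer (T.orderIsoOfFin rfl) hr).symm

lemma cut_count (hr : 2 ≤ r) (j : ℕ) (hj : j ≤ Fintype.card γ) :
    ((allWords γ).filter
      (fun w => ValidCut r j w)).card =
    (Fintype.card γ).choose j * permAvoidCount r (Fintype.card γ - j) := by
  have hmem : ∀ w ∈ (allWords γ).filter
      (fun w => ValidCut r j w),
      (w.take j).toFinset ∈ Finset.univ.powersetCard j := by
    intro w hw
    rw [Finset.mem_filter] at hw
    rw [Finset.mem_powersetCard]
    refine ⟨Finset.subset_univ _, ?_⟩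
    rw [List.toFinset_card_of_nodup ((nodup_of_mem_allWords hw.1).sublist (List.take_sublist j w))]
    rw [List.length_take, length_of_mem_allWords hw.1]
    omega
  have hfib : ∀ S ∈ Finset.univ.powersetCard j,
      (((allWords γ).filter
        (fun w => ValidCut r j w)).filter
        (fun w => (w.take j).toFinset = S)).card
      = permAvoidCount r (Fintype.card γ - j) := by
    intro S hS
    have hScard : S.card = j := (Finset.mem_powersetCard.1 hS).2
    have hkey := card_avoid_finset r (by omega) Sᶜ
    rw [Finset.card_compl, hScard] at hkey
    rw [← hkey]
    symm
    apply Finset.card_bij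
      (fun (u : List {x // x ∈ Sᶜ}) (_ : u ∈ (allWords {x // x ∈ Sᶜ}).filter
          (fun w => AvoidsInc r w)) => S.sort (· ≤ ·) ++ u.map Subtype.val)
    · intro u hu
      rw [Finset.mem_filter] at hu
      have hlsort : (S.sort (· ≤ ·)).length = j := by rw [Finset.length_sort, hScard]
      have htake : (S.sort (· ≤ ·) ++ u.map Subtype.val).take j = S.sort (· ≤ ·) :=
        List.take_left' hlsort
      have hdrop : (S.sort (· ≤ ·) ++ u.map Subtype.val).drop j = u.map Subtype.val :=
        List.drop_left' hlsort
      simp only [Finset.mem_filter]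
      refine ⟨⟨?_, ?_, ?_⟩, ?_⟩
      · apply perm_allWords
        · rw [List.nodup_append]
          refine ⟨Finset.sort_nodup _ _, (nodup_of_mem_allWords hu.1).map Subtype.val_injective, ?_⟩
          intro x hx b hx' hxb
          obtain ⟨y, _, rfl⟩ := List.mem_map.1 hx'
          subst hxb
          have : (y : γ) ∈ Sᶜ := y.2
          rw [Finset.mem_compl] at this
          exact this (by simpa using hx)
        · intro x
          rw [List.mem_append]
          by_cases hxS : x ∈ S
          · exact Or.inl (by simpa using hxS)
          · refine Or.inr ?_
            rw [List.mem_map]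
            exact ⟨⟨x, Finset.mem_compl.2 hxS⟩, mem_of_mem_allWords hu.1 _, rfl⟩
      · rw [htake]
        exact List.isChain_iff_pairwise.2 (List.sortedLT_iff_pairwise.1 (Finset.sortedLT_sort S))
      · rw [hdrop]
        exact (avoidsInc_map_iff (Subtype.strictMono_coe _) (by omega) u).2 hu.2
      · rw [htake, Finset.sort_toFinset]
    · intro a _ b _ h
      have := List.append_cancel_left h
      exact List.map_injective_iff.2 Subtype.val_injective this
    · intro w hw
      simp only [Finset.mem_filter] at hw
      obtain ⟨⟨hw1, hw2, hw3⟩, hw4⟩ := hw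
      have hnd : w.Nodup := nodup_of_mem_allWords hw1
      have hnd' : w.Nodup := hnd
      rw [← List.take_append_drop j w, List.nodup_append] at hnd'
      have hpf : ∀ x ∈ w.drop j, x ∈ Sᶜ := by
        intro x hx
        rw [Finset.mem_compl, ← hw4, List.mem_toFinset]
        intro hx'
        exact hnd'.2.2 x hx' x hx rfl
      refine ⟨(w.drop j).attachWith (· ∈ Sᶜ) hpf, ?_, ?_⟩
      · rw [Finset.mem_filter]
        constructor
        · apply perm_allWords
          · apply List.Nodup.of_map (f := Subtype.val)
            rw [List.attachWith_map_subtype_val]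
            exact hnd.sublist (List.drop_sublist j w)
          · rintro ⟨v, hv⟩
            rw [_root_.mem_attachWith]
            have hvw : v ∈ w := mem_of_mem_allWords hw1 v
            rw [← List.take_append_drop j w, List.mem_append] at hvw
            rcases hvw with h | h
            · exfalso
              rw [Finset.mem_compl, ← hw4, List.mem_toFinset] at hv
              exact hv h
            · exact h
        · have : ((w.drop j).attachWith (· ∈ Sᶜ) hpf).map Subtype.val = w.drop j :=
            List.attachWith_map_subtype_val _
          rw [← avoidsInc_map_iff (g := (Subtype.val : {x // x ∈ Sᶜ} → γ))
            (Subtype.strictMono_coe _) (by omega), this]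
          exact hw3
      · have hsort : S.sort (· ≤ ·) = w.take j := by
          rw [← hw4]
          refine (List.toFinset_sort (· ≤ ·) (hnd.sublist (List.take_sublist j w))).2 ?_
          exact (List.isChain_iff_pairwise.1 hw2).imp le_of_lt
        rw [List.attachWith_map_subtype_val, hsort, List.take_append_drop]
  rw [Finset.card_eq_sum_card_fiberwise hmem, Finset.sum_congr rfl hfib, Finset.sum_const,
      Finset.card_powersetCard, Finset.card_univ, smul_eq_mul]
end Part3

section Part4
variable {r : ℕ}

lemma conv_sum (hr : 2 ≤ r) (n c : ℕ) :
    ∑ w ∈ allWords (Fin n),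
      ((Finset.range (n+1)).filter (fun j => j % r = c ∧ ValidCut r j w)).card
    = ∑ j ∈ Finset.range (n+1),
        (if j % r = c then n.choose j * permAvoidCount r (n - j) else 0) := by
  have e1 : ∀ w : List (Fin n), ((Finset.range (n+1)).filter
      (fun j => j % r = c ∧ ValidCut r j w)).card
      = ∑ j ∈ Finset.range (n+1), if j % r = c ∧ ValidCut r j w then 1 else 0 :=
    fun w => Finset.card_filter _ _
  rw [Finset.sum_congr rfl (fun w _ => e1 w), Finset.sum_comm]
  apply Finset.sum_congr rfl
  intro j hj
  rw [Finset.mem_range] at hj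
  by_cases hc : j % r = c
  · rw [if_pos hc]
    have : ∀ w ∈ allWords (Fin n),
        (if j % r = c ∧ ValidCut r j w then 1 else 0)
        = (if ValidCut r j w then 1 else 0) := by
      intro w _
      by_cases hv : ValidCut r j w
      · rw [if_pos ⟨hc, hv⟩, if_pos hv]
      · rw [if_neg (fun h => hv h.2), if_neg hv]
    rw [Finset.sum_congr rfl this, ← Finset.card_filter]
    have := cut_count (γ := Fin n) hr j (by simp; omega)
    simpa using this
  · rw [if_neg hc]
    apply Finset.sum_eq_zero
    intro w _
    rw [if_neg (fun h => hc h.1)]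

lemma reindex0' (hr : 2 ≤ r) (n : ℕ) (f : ℕ → ℕ) (hf : ∀ j, n < j → f j = 0) :
    ∑ j ∈ Finset.range (n+1), (if j % r = 0 then f j else 0)
    = ∑ m ∈ Finset.range (n+1), f (m * r) := by
  rw [← Finset.sum_filter,
    ← Finset.sum_image (f := f) (g := fun m => m * r)
      (fun a _ b _ h => Nat.eq_of_mul_eq_mul_right (by omega) h)]
  apply Finset.sum_subset
  · intro j hj
    simp only [Finset.mem_filter, Finset.mem_range] at hj
    rw [Finset.mem_image]
    exact ⟨j / r, Finset.mem_range.2 (by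
      have := Nat.div_le_self j r; omega),
      Nat.div_mul_cancel (Nat.dvd_of_mod_eq_zero hj.2)⟩
  · intro j hj hj'
    rw [Finset.mem_image] at hj
    obtain ⟨m, _, rfl⟩ := hj
    apply hf
    by_contra h
    exact hj' (by
      simp only [Finset.mem_filter, Finset.mem_range]
      exact ⟨by omega, Nat.mul_mod_left m r⟩)

lemma reindex1 (hr : 2 ≤ r) (n : ℕ) (f : ℕ → ℕ) (hf : ∀ j, n < j → f j = 0) :
    ∑ j ∈ Finset.range (n+1), (if j % r = 1 then f j else 0)
    = ∑ m ∈ Finset.range (n+1), f (m * r + 1) := by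
  rw [← Finset.sum_filter,
    ← Finset.sum_image (f := f) (g := fun m => m * r + 1)
      (fun a _ b _ h => Nat.eq_of_mul_eq_mul_right (show 0 < r by omega)
        (Nat.add_right_cancel (h : a * r + 1 = b * r + 1)))]
  apply Finset.sum_subset
  · intro j hj
    simp only [Finset.mem_filter, Finset.mem_range] at hj
    rw [Finset.mem_image]
    refine ⟨j / r, Finset.mem_range.2 (by have := Nat.div_le_self j r; omega), ?_⟩
    have := Nat.div_add_mod j r
    rw [Nat.mul_comm]
    omega
  · intro j hj hj'
    rw [Finset.mem_image] at hj
    obtain ⟨m, _, rfl⟩ := hj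
    apply hf
    by_contra h
    refine hj' ?_
    simp only [Finset.mem_filter, Finset.mem_range]
    refine ⟨by omega, ?_⟩
    rw [Nat.mul_comm, Nat.mul_add_mod, Nat.mod_eq_of_lt (by omega)]

lemma grand_identity (hr : 2 ≤ r) (n : ℕ) (hn : 1 ≤ n) :
    ∑ m ∈ Finset.range (n+1), n.choose (m * r) * permAvoidCount r (n - m * r)
    = ∑ m ∈ Finset.range (n+1), n.choose (m * r + 1) * permAvoidCount r (n - (m * r + 1)) := by
  have hf : ∀ j, n < j → n.choose j * permAvoidCount r (n - j) = 0 := by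
    intro j hj
    rw [Nat.choose_eq_zero_of_lt hj, Nat.zero_mul]
  rw [← reindex0' hr n _ hf, ← reindex1 hr n _ hf]
  have hsum : ∀ w ∈ allWords (Fin n),
      ((Finset.range (n+1)).filter (fun j => j % r = 0 ∧ ValidCut r j w)).card
      = ((Finset.range (n+1)).filter (fun j => j % r = 1 ∧ ValidCut r j w)).card := by
    intro w hw
    have hl : w.length = n := (length_of_mem_allWords hw).trans (Fintype.card_fin n)
    have := card_valid_eq (w := w) hr (by omega)
    rwa [hl] at this
  have := Finset.sum_congr rfl hsum
  rw [conv_sum hr n 0, conv_sum hr n 1] at this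
  exact this

end Part4

lemma permAvoidCount_zero (r : ℕ) (hr : 2 ≤ r) : permAvoidCount r 0 = 1 := by
  rw [permAvoidCount_eq]
  have h0 : allWords (Fin 0) = {([] : List (Fin 0))} := by
    ext w
    rw [mem_allWords]
    simp only [Finset.univ_eq_empty, Finset.sort_empty, Finset.mem_singleton]
    exact List.perm_nil
  rw [h0, Finset.filter_singleton, if_pos (avoidsInc_of_short (by simp; omega))]
  rfl

theorem perm_avoid_fast_recurrence (r : ℕ) (hr : 2 ≤ r) :
    permAvoidCount r 0 = 1 ∧
    ∀ n : ℕ, 1 ≤ n →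
      (permAvoidCount r n : ℤ) =
        n * permAvoidCount r (n - 1) +
          ∑ m ∈ Finset.Icc 1 n,
            (-(n.choose (m * r) : ℤ) * permAvoidCount r (n - m * r) +
              (n.choose (m * r + 1) : ℤ) * permAvoidCount r (n - m * r - 1)) := by
  refine ⟨permAvoidCount_zero r hr, ?_⟩
  intro n hn
  have hid := grand_identity (r := r) hr n hn
  have hins : Finset.range (n+1) = insert 0 (Finset.Icc 1 n) := by
    ext x; simp only [Finset.mem_range, Finset.mem_insert, Finset.mem_Icc]; omega
  have h0not : (0:ℕ) ∉ Finset.Icc 1 n := by simp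
  rw [hins, Finset.sum_insert h0not, Finset.sum_insert h0not] at hid
  simp only [Nat.zero_mul, Nat.choose_zero_right, Nat.sub_zero, Nat.one_mul, Nat.zero_add,
    Nat.choose_one_right] at hid
  simp only [← Nat.sub_sub] at hid
  -- hid : a n + Σ = n * a (n-1) + Σ'
  have hz := congrArg (fun k : ℕ => (k : ℤ)) hid
  push_cast at hz
  have hsplit : ∑ m ∈ Finset.Icc 1 n,
      (-(n.choose (m * r) : ℤ) * permAvoidCount r (n - m * r) +
        (n.choose (m * r + 1) : ℤ) * permAvoidCount r (n - m * r - 1))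
      = (∑ m ∈ Finset.Icc 1 n, (n.choose (m * r + 1) : ℤ) * permAvoidCount r (n - m * r - 1))
        - ∑ m ∈ Finset.Icc 1 n, (n.choose (m * r) : ℤ) * permAvoidCount r (n - m * r) := by
    rw [← Finset.sum_sub_distrib]
    apply Finset.sum_congr rfl
    intro m _
    ring
  rw [hsplit]
  linarith [hz]
end

section
/- The multivariate generating function for words over the alphabet {1,...,n} avoiding the consecutive pattern 123 is 1/(1 - e_1 + e_3 - e_4 + e_6 - e_7 + e_9 - e_{10} + ...), where e_i is the i-th elementary symmetric polynomial in x_1,...,x_n. Equivalently, the coefficient of x_1^{m_1}···x_n^{m_n} in this rational power series equals the number of words consisting of m_1 ones, ..., m_n n's with no three consecutive strictly increasing letters. -/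
/-- Number of words over `Fin n` with multiplicity vector `m` avoiding the
consecutive pattern `1 2 ... r`. -/
noncomputable def wordAvoidCount (r n : ℕ) (m : Fin n → ℕ) : ℕ :=
  Nat.card {w : List (Fin n) // (∀ j, w.count j = m j) ∧ AvoidsInc r w}

noncomputable def wordAvoidGF (r n : ℕ) : MvPowerSeries (Fin n) ℤ :=
  fun d => (wordAvoidCount r n ⇑d : ℤ)

namespace Aux123

open Finset List

attribute [local instance] Classical.propDecidable

def sgn (k : ℕ) : ℤ := if k % 3 = 0 then 1 else if k % 3 = 1 then -1 else 0

lemma sgn_three_consec (a : ℕ) : sgn a + sgn (a+1) + sgn (a+2) = 0 := by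
  unfold sgn
  have h : a % 3 = 0 ∨ a % 3 = 1 ∨ a % 3 = 2 := by omega
  rcases h with h | h | h <;> simp [Nat.add_mod, h]

lemma sum_sgn_Icc3 (a : ℕ) : ∑ j ∈ Finset.Icc a (a+2), sgn j = 0 := by
  have h : Finset.Icc a (a+2) = {a, a+1, a+2} := by ext x; simp [Finset.mem_Icc]; omega
  rw [h, Finset.sum_insert (by simp only [Finset.mem_insert, Finset.mem_singleton]; omega),
    Finset.sum_insert (by simp only [Finset.mem_singleton]; omega),
    Finset.sum_singleton, ← add_assoc, sgn_three_consec]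

variable {n : ℕ}

lemma avoid_infix {w w' : List (Fin n)} (h : w' <:+: w) (hw : AvoidsInc 3 w) :
    AvoidsInc 3 w' := by
  rintro ⟨l, hl, h3, hc⟩
  exact hw ⟨l, hl.trans h, h3, hc⟩

lemma avoid_nil : AvoidsInc 3 ([] : List (Fin n)) := by
  rintro ⟨l, hl, h3, -⟩
  have h2 := hl.length_le
  simp only [List.length_nil] at h2
  omega

lemma avoid_iff {w : List (Fin n)} :
    AvoidsInc 3 w ↔ ∀ i, (h : i + 2 < w.length) →
      ¬ (w[i]'(by omega) < w[i+1]'(by omega) ∧ w[i+1]'(by omega) < w[i+2]'(by omega)) := by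
  constructor
  · intro H i h hlt
    refine H ⟨(w.drop i).take 3, ?_, ?_, ?_⟩
    · exact (List.take_prefix 3 (w.drop i)).isInfix.trans (List.drop_suffix i w).isInfix
    · rw [List.length_take, List.length_drop]; omega
    · unfold List.Chain'
      rw [List.isChain_iff_getElem]
      intro k hk
      rw [List.length_take, List.length_drop] at hk
      have hk3 : k < 2 := by omega
      simp only [List.get_eq_getElem, List.getElem_take, List.getElem_drop]
      interval_cases k
      · simpa using hlt.1
      · simpa [Nat.add_assoc] using hlt.2
  · rintro H ⟨l, ⟨s, t, hst⟩, h3, hc⟩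
    subst hst
    have hsl : (s ++ l).length = s.length + 3 := by simp [h3]
    have key : ∀ k (hk : k < 3),
        (s ++ l ++ t)[s.length + k]'(by simp [hsl]; omega) = l[k]'(by omega) := by
      intro k hk
      rw [List.getElem_append_left (by simp [hsl]; omega : s.length + k < (s ++ l).length),
        List.getElem_append_right (by omega : s.length ≤ s.length + k)]
      congr 1
      omega
    have h2 := List.isChain_iff_getElem.mp hc
    refine H s.length (by simp [hsl]; omega) ⟨?_, ?_⟩
    · have e0 := key 0 (by norm_num); have e1 := key 1 (by norm_num)
      have h01 := h2 0 (by omega)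
      simp only [Nat.add_zero] at e0
      simp only [e0, e1]
      exact h01
    · have e1 := key 1 (by norm_num); have e2 := key 2 (by norm_num)
      have h12 := h2 1 (by omega)
      simp only [e1, e2, show s.length + 1 + 1 = s.length + 2 by omega]
      exact h12

def Inc (w : List (Fin n)) (j : ℕ) : Prop :=
  ∀ i, i + 1 < j → (h : i + 1 < w.length) → w[i]'(by omega) < w[i+1]'(by omega)

lemma chain'_take_iff {w : List (Fin n)} {j : ℕ} :
    (w.take j).Chain' (· < ·) ↔ Inc w j := by
  unfold List.Chain'
  rw [List.isChain_iff_getElem]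
  constructor
  · intro H i hij hiw
    have := H i (by rw [List.length_take]; omega)
    simpa [List.get_eq_getElem, List.getElem_take] using this
  · intro H i hl
    rw [List.length_take] at hl
    have := H i (by omega) (by omega)
    simpa [List.get_eq_getElem, List.getElem_take] using this

lemma Inc_mono {w : List (Fin n)} {j j' : ℕ} (h : j' ≤ j) (hj : Inc w j) : Inc w j' :=
  fun i hi hiw => hj i (by omega) hiw

lemma avoid_drop_iff {w : List (Fin n)} {k : ℕ} :
    AvoidsInc 3 (w.drop k) ↔ ∀ i, (h : k + i + 2 < w.length) →
      ¬ (w[k+i]'(by omega) < w[k+i+1]'(by omega) ∧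
         w[k+i+1]'(by omega) < w[k+i+2]'(by omega)) := by
  rw [avoid_iff]
  constructor
  · intro H i h
    have := H i (by rw [List.length_drop]; omega)
    simpa [List.getElem_drop, ← Nat.add_assoc] using this
  · intro H i h
    rw [List.length_drop] at h
    have := H i (by omega)
    simpa [List.getElem_drop, ← Nat.add_assoc] using this

lemma exists_avoid_drop (w : List (Fin n)) : ∃ k, AvoidsInc 3 (w.drop k) :=
  ⟨w.length, by rw [List.drop_length]; exact avoid_nil⟩

/-- first index from which the suffix avoids 123 -/
noncomputable def j0 (w : List (Fin n)) : ℕ := Nat.find (exists_avoid_drop w)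

/-- longest increasing prefix -/
noncomputable def L (w : List (Fin n)) : ℕ := Nat.findGreatest (Inc w) w.length

lemma L_le (w : List (Fin n)) : L w ≤ w.length := Nat.findGreatest_le _

lemma Inc_of_le_L {w : List (Fin n)} {j : ℕ} (h : j ≤ L w) : Inc w j := by
  rcases Nat.eq_zero_or_pos (L w) with h0 | h0
  · have : j = 0 := by omega
    subst this
    intro i hi _
    omega
  · exact Inc_mono h (Nat.findGreatest_of_ne_zero rfl (by omega))

lemma le_L_iff {w : List (Fin n)} {j : ℕ} (hj : j ≤ w.length) : j ≤ L w ↔ Inc w j :=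
  ⟨Inc_of_le_L, fun h => Nat.le_findGreatest hj h⟩

lemma avoid_drop_j0 (w : List (Fin n)) : AvoidsInc 3 (w.drop (j0 w)) := Nat.find_spec (exists_avoid_drop w)

lemma j0_le_iff {w : List (Fin n)} {j : ℕ} : j0 w ≤ j ↔ AvoidsInc 3 (w.drop j) := by
  constructor
  · intro h
    have h2 : w.drop j = (w.drop (j0 w)).drop (j - j0 w) := by
      rw [List.drop_drop]
      congr 1
      omega
    rw [h2]
    exact avoid_infix (List.drop_suffix _ _).isInfix (avoid_drop_j0 w)
  · intro h
    exact Nat.find_le h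

lemma j0_le_length (w : List (Fin n)) : j0 w ≤ w.length :=
  j0_le_iff.mpr (by rw [List.drop_length]; exact avoid_nil)

lemma lt_idx {w : List (Fin n)} {a b c d : ℕ} (hac : a = c) (hbd : b = d)
    (hc : c < w.length) (hd : d < w.length) (h : w[c] < w[d]) :
    w[a]'(hac ▸ hc) < w[b]'(hbd ▸ hd) := by
  subst hac; subst hbd; exact h

lemma L_eq_j0_add_two {w : List (Fin n)} (h1 : 1 ≤ j0 w) (h2 : j0 w ≤ L w) :
    L w = j0 w + 2 := by
  -- a 123-occurrence starts exactly at j0 - 1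
  have hnot : ¬ AvoidsInc 3 (w.drop (j0 w - 1)) := by
    intro h
    have := j0_le_iff.mpr h
    omega
  rw [avoid_drop_iff] at hnot
  push_neg at hnot
  obtain ⟨m, hm, hlt1, hlt2⟩ := hnot
  have havoid := avoid_drop_j0 w
  rw [avoid_drop_iff] at havoid
  have hm0 : m = 0 := by
    by_contra hm0
    have := havoid (m - 1) (by omega)
    apply this
    constructor
    · exact lt_idx (by omega) (by omega) (by omega) (by omega) hlt1
    · exact lt_idx (by omega) (by omega) (by omega) (by omega) hlt2
  subst hm0
  -- hlt1 : w[j0-1+0] < w[j0-1+0+1], hlt2 : next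
  have hlen : j0 w + 1 < w.length := by omega
  have hInc : Inc w (j0 w + 2) := by
    intro i hi hiw
    rcases (by omega : i + 1 < j0 w ∨ i + 1 = j0 w ∨ i + 1 = j0 w + 1) with hc | hc | hc
    · exact Inc_of_le_L h2 i hc hiw
    · exact lt_idx (by omega) (by omega) (by omega) (by omega) hlt1
    · exact lt_idx (by omega) (by omega) (by omega) (by omega) hlt2
  have hge : j0 w + 2 ≤ L w := Nat.le_findGreatest (by omega) hInc
  have hle : L w ≤ j0 w + 2 := by
    by_contra hcon
    push_neg at hcon
    have hlen2 : j0 w + 2 < w.length := by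
      have := L_le w
      omega
    have hIncL : Inc w (j0 w + 3) := Inc_of_le_L (by omega)
    exact havoid 0 (by omega)
      ⟨lt_idx (by omega) (by omega) (by omega) (by omega)
          (hIncL (j0 w) (by omega) (by omega)),
        lt_idx (by omega) (by omega) (by omega) (by omega)
          (hIncL (j0 w + 1) (by omega) (by omega))⟩
  omega

lemma L_le_two_of_j0_eq_zero {w : List (Fin n)} (h0 : j0 w = 0) : L w ≤ 2 := by
  by_contra hcon
  push_neg at hcon
  have hlen : 2 < w.length := by
    have := L_le w
    omega
  have hInc : Inc w 3 := Inc_of_le_L (by omega)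
  have havoid := avoid_drop_j0 w
  rw [h0, avoid_drop_iff] at havoid
  exact havoid 0 (by omega)
    ⟨lt_idx (by omega) (by omega) (by omega) (by omega) (hInc 0 (by omega) (by omega)),
      lt_idx (by omega) (by omega) (by omega) (by omega) (hInc 1 (by omega) (by omega))⟩

lemma one_le_L {w : List (Fin n)} (hw : w ≠ []) : 1 ≤ L w :=
  Nat.le_findGreatest (by
      have := List.length_pos_iff.mpr hw
      omega)
    (fun i hi _ => by omega)

/-- the signed count of admissible markings of a word -/
lemma g_eq (w : List (Fin n)) :
    (∑ j ∈ Finset.range (w.length + 1),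
        if (w.take j).Chain' (· < ·) ∧ AvoidsInc 3 (w.drop j) then sgn j else 0) =
      if w = [] then 1 else 0 := by
  classical
  rw [Finset.sum_ite, Finset.sum_const_zero, add_zero]
  have hfilter : (Finset.range (w.length + 1)).filter
      (fun j => (w.take j).Chain' (· < ·) ∧ AvoidsInc 3 (w.drop j)) =
      Finset.Icc (j0 w) (L w) := by
    ext j
    simp only [Finset.mem_filter, Finset.mem_range, Finset.mem_Icc, chain'_take_iff,
      ← j0_le_iff]
    constructor
    · rintro ⟨hj, hInc, hj0⟩
      exact ⟨hj0, Nat.le_findGreatest (by omega) hInc⟩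
    · rintro ⟨hj0, hjL⟩
      have := L_le w
      exact ⟨by omega, Inc_of_le_L hjL, hj0⟩
  rw [hfilter]
  by_cases hw : w = []
  · subst hw
    have hj0 : j0 ([] : List (Fin n)) = 0 :=
      Nat.eq_zero_of_le_zero (j0_le_length _)
    have hL : L ([] : List (Fin n)) = 0 :=
      Nat.eq_zero_of_le_zero (L_le _)
    simp [hj0, hL, sgn]
  · simp only [hw, if_false]
    by_cases hjL : j0 w ≤ L w
    · rcases Nat.eq_zero_or_pos (j0 w) with h0 | h0
      · rw [h0]
        have h1 := one_le_L hw
        have h2 := L_le_two_of_j0_eq_zero h0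
        rcases (by omega : L w = 1 ∨ L w = 2) with hL | hL <;> rw [hL]
        · decide
        · simpa using sum_sgn_Icc3 0
      · rw [L_eq_j0_add_two h0 hjL]
        exact sum_sgn_Icc3 _
    · rw [Finset.Icc_eq_empty (by omega), Finset.sum_empty]

/-! ### Counting layer -/

/-- indicator multidegree of a finset -/
noncomputable def chi (S : Finset (Fin n)) : Fin n →₀ ℕ := ∑ i ∈ S, Finsupp.single i 1

lemma chi_apply (S : Finset (Fin n)) (j : Fin n) :
    chi S j = if j ∈ S then 1 else 0 := by
  classical
  rw [chi, Finset.sum_apply']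
  simp [Finsupp.single_apply, Finset.sum_ite_eq' S j (fun _ => 1)]

/-- content of a word -/
noncomputable def cnt (w : List (Fin n)) : Fin n →₀ ℕ :=
  Finsupp.equivFunOnFinite.symm fun j => w.count j

lemma cnt_apply (w : List (Fin n)) (j : Fin n) : cnt w j = w.count j := rfl

lemma cnt_eq_iff {w : List (Fin n)} {d : Fin n →₀ ℕ} :
    cnt w = d ↔ ∀ j, w.count j = d j := by
  constructor
  · intro h j; rw [← h]; rfl
  · intro h; ext j; rw [cnt_apply, h j]

lemma cnt_append (u w : List (Fin n)) : cnt (u ++ w) = cnt u + cnt w := by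
  ext j
  simp [cnt_apply, List.count_append]

lemma cnt_nil : cnt ([] : List (Fin n)) = 0 := by
  ext j
  simp [cnt_apply]

lemma cnt_eq_zero {w : List (Fin n)} : cnt w = 0 ↔ w = [] := by
  constructor
  · intro h
    cases w with
    | nil => rfl
    | cons a t =>
      have := congrArg (fun g => g a) h
      simp [cnt_apply, List.count_cons] at this
  · rintro rfl; exact cnt_nil

lemma cnt_sort (S : Finset (Fin n)) : cnt (S.sort (· ≤ ·)) = chi S := by
  ext j
  rw [cnt_apply, chi_apply]
  by_cases h : j ∈ S
  · rw [List.count_eq_one_of_mem (S.sort_nodup _) (by rwa [Finset.mem_sort]), if_pos h]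
  · rw [List.count_eq_zero_of_not_mem (by rwa [Finset.mem_sort]), if_neg h]

/-- all words with content `d` -/
noncomputable def allW (d : Fin n →₀ ℕ) : Finset (List (Fin n)) :=
  ((Finsupp.toMultiset d).toList).permutations.toFinset

lemma mem_allW {d : Fin n →₀ ℕ} {w : List (Fin n)} : w ∈ allW d ↔ cnt w = d := by
  rw [allW, List.mem_toFinset, List.mem_permutations, List.perm_iff_count, cnt_eq_iff]
  have hc : ∀ j : Fin n, (Finsupp.toMultiset d).toList.count j = d j := fun j => by
    rw [← Multiset.coe_count, Multiset.coe_toList, Finsupp.count_toMultiset]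
  constructor
  · intro h j; rw [h j, hc j]
  · intro h j; rw [h j, hc j]

/-- number of words with content `d` avoiding consecutive `123` -/
noncomputable def cf (d : Fin n →₀ ℕ) : ℕ := #((allW d).filter (AvoidsInc 3))

lemma wordAvoidCount_eq (d : Fin n →₀ ℕ) : wordAvoidCount 3 n ⇑d = cf d := by
  rw [wordAvoidCount]
  have e : {w : List (Fin n) // (∀ j, w.count j = d j) ∧ AvoidsInc 3 w} ≃
      {w : List (Fin n) // w ∈ (allW d).filter (AvoidsInc 3)} :=
    Equiv.subtypeEquivRight fun w => by
      rw [Finset.mem_filter, mem_allW, cnt_eq_iff]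
  rw [Nat.card_congr e, Nat.card_eq_finsetCard, cf]

lemma term_eq (S : Finset (Fin n)) (d : Fin n →₀ ℕ) :
    (if chi S ≤ d then (cf (d - chi S) : ℤ) else 0) =
      ∑ v ∈ allW d, (if v.take #S = S.sort (· ≤ ·) ∧ AvoidsInc 3 (v.drop #S)
        then 1 else 0) := by
  classical
  rw [Finset.sum_ite, Finset.sum_const_zero, add_zero, Finset.sum_const, nsmul_eq_mul,
    mul_one]
  by_cases hle : chi S ≤ d
  · rw [if_pos hle, cf]
    norm_cast
    apply Finset.card_bij' (fun w _ => S.sort (· ≤ ·) ++ w)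
      (fun v _ => v.drop #S)
    · intro w hw
      rw [Finset.mem_filter] at hw ⊢
      obtain ⟨hw1, hw2⟩ := hw
      rw [mem_allW] at hw1
      refine ⟨?_, ?_, ?_⟩
      · rw [mem_allW, cnt_append, cnt_sort, hw1]
        exact add_tsub_cancel_of_le hle
      · rw [List.take_left' (Finset.length_sort _)]
      · rwa [List.drop_left' (Finset.length_sort _)]
    · intro v hv
      rw [Finset.mem_filter] at hv ⊢
      obtain ⟨hv1, hv2, hv3⟩ := hv
      rw [mem_allW] at hv1
      have hcnt : chi S + cnt (v.drop #S) = d := by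
        rw [← hv1, ← cnt_sort, ← hv2, ← cnt_append, List.take_append_drop]
      refine ⟨?_, hv3⟩
      rw [mem_allW]
      rw [← hcnt]
      simp
    · intro w hw
      rw [List.drop_left' (Finset.length_sort _)]
    · intro v hv
      rw [Finset.mem_filter] at hv
      obtain ⟨hv1, hv2, hv3⟩ := hv
      conv_rhs => rw [← List.take_append_drop #S v]
      rw [hv2]
  · rw [if_neg hle]
    symm
    norm_cast
    rw [Finset.card_eq_zero, Finset.filter_eq_empty_iff]
    intro v hv
    rw [mem_allW] at hv
    rintro ⟨h1, -⟩
    apply hle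
    rw [← hv]
    conv_rhs => rw [← List.take_append_drop #S v]
    rw [cnt_append, h1, cnt_sort]
    exact le_self_add

lemma inner_eq (v : List (Fin n)) :
    (∑ S ∈ (Finset.univ : Finset (Fin n)).powerset,
        sgn #S * (if v.take #S = S.sort (· ≤ ·) ∧ AvoidsInc 3 (v.drop #S)
          then 1 else 0)) =
      ∑ j ∈ Finset.range (v.length + 1),
        (if (v.take j).Chain' (· < ·) ∧ AvoidsInc 3 (v.drop j) then sgn j else 0) := by
  classical
  simp_rw [mul_ite, mul_one, mul_zero]
  rw [Finset.sum_ite, Finset.sum_const_zero, add_zero,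
    Finset.sum_ite, Finset.sum_const_zero, add_zero]
  apply Finset.sum_nbij' (fun S => #S) (fun j => (v.take j).toFinset)
  · intro S hS
    rw [Finset.mem_filter] at hS
    obtain ⟨-, h1, h2⟩ := hS
    have hlen : #S ≤ v.length := by
      have := congrArg List.length h1
      rw [List.length_take, Finset.length_sort] at this
      omega
    rw [Finset.mem_filter, Finset.mem_range]
    refine ⟨by omega, ?_, h2⟩
    rw [h1]
    exact List.isChain_iff_pairwise.mpr (List.sortedLT_iff_pairwise.mp S.sortedLT_sort)
  · intro j hj
    rw [Finset.mem_filter, Finset.mem_range] at hj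
    obtain ⟨hj1, hc, ha⟩ := hj
    have hpw : (v.take j).Pairwise (· < ·) := List.isChain_iff_pairwise.mp hc
    have hnd : (v.take j).Nodup := hpw.nodup
    have hcard : #(v.take j).toFinset = j := by
      rw [List.toFinset_card_of_nodup hnd, List.length_take]
      omega
    rw [Finset.mem_filter, Finset.mem_powerset]
    refine ⟨Finset.subset_univ _, ?_, ?_⟩
    · rw [hcard]
      symm
      exact (List.toFinset_sort (r := (· ≤ ·)) hnd).mpr (hpw.imp le_of_lt)
    · rw [hcard]
      exact ha
  · intro S hS
    rw [Finset.mem_filter] at hS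
    rw [hS.2.1, Finset.sort_toFinset]
  · intro j hj
    rw [Finset.mem_filter, Finset.mem_range] at hj
    obtain ⟨hj1, hc, -⟩ := hj
    have hpw : (v.take j).Pairwise (· < ·) := List.isChain_iff_pairwise.mp hc
    rw [List.toFinset_card_of_nodup hpw.nodup, List.length_take]
    omega
  · intro S hS
    rfl

lemma main_sum (d : Fin n →₀ ℕ) :
    (∑ S ∈ (Finset.univ : Finset (Fin n)).powerset,
        sgn #S * (if chi S ≤ d then (cf (d - chi S) : ℤ) else 0)) =
      if d = 0 then 1 else 0 := by
  classical
  have step1 : ∀ S ∈ (Finset.univ : Finset (Fin n)).powerset,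
      sgn #S * (if chi S ≤ d then (cf (d - chi S) : ℤ) else 0) =
        ∑ v ∈ allW d, sgn #S *
          (if v.take #S = S.sort (· ≤ ·) ∧ AvoidsInc 3 (v.drop #S) then 1 else 0) := by
    intro S _
    rw [← Finset.mul_sum, ← term_eq]
  rw [Finset.sum_congr rfl step1, Finset.sum_comm]
  have step2 : ∀ v ∈ allW d,
      (∑ S ∈ (Finset.univ : Finset (Fin n)).powerset, sgn #S *
          (if v.take #S = S.sort (· ≤ ·) ∧ AvoidsInc 3 (v.drop #S) then 1 else 0)) =
        if v = [] then 1 else 0 := by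
    intro v _
    rw [inner_eq, g_eq]
  rw [Finset.sum_congr rfl step2]
  by_cases hd : d = 0
  · subst hd
    have : allW (0 : Fin n →₀ ℕ) = {[]} := by
      ext v
      rw [mem_allW, cnt_eq_zero, Finset.mem_singleton]
    rw [this, Finset.sum_singleton, if_pos rfl, if_pos rfl]
  · rw [if_neg hd]
    apply Finset.sum_eq_zero
    intro v hv
    rw [mem_allW] at hv
    rw [if_neg]
    intro h
    subst h
    rw [cnt_nil] at hv
    exact hd hv.symm

/-! ### Algebra layer -/

lemma esymm_eq_zero_of_gt {k : ℕ} (hk : n < k) :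
    MvPolynomial.esymm (Fin n) ℤ k = 0 := by
  rw [MvPolynomial.esymm,
    Finset.powersetCard_eq_empty.mpr (by simpa using hk), Finset.sum_empty]

lemma sum_range_three_mul {M : Type*} [AddCommMonoid M] (N : ℕ) (F : ℕ → M) :
    ∑ k ∈ Finset.range (3 * N), F k =
      ∑ m ∈ Finset.range N, (F (3*m) + F (3*m+1) + F (3*m+2)) := by
  induction N with
  | zero => simp
  | succ N ih =>
    rw [show 3 * (N + 1) = 3 * N + 1 + 1 + 1 by ring, Finset.sum_range_succ,
      Finset.sum_range_succ, Finset.sum_range_succ, ih, Finset.sum_range_succ]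
    abel

lemma poly_eq :
    (1 - MvPolynomial.esymm (Fin n) ℤ 1 +
        ∑ m ∈ Finset.Icc 1 n,
          (MvPolynomial.esymm (Fin n) ℤ (3 * m) -
            MvPolynomial.esymm (Fin n) ℤ (3 * m + 1))) =
      ∑ S ∈ (Finset.univ : Finset (Fin n)).powerset,
        MvPolynomial.monomial (chi S) (sgn #S) := by
  classical
  have h1 : ∑ S ∈ (Finset.univ : Finset (Fin n)).powerset,
      MvPolynomial.monomial (chi S) (sgn #S) =
      ∑ k ∈ Finset.range (n + 1), ∑ S ∈ Finset.powersetCard k Finset.univ,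
        MvPolynomial.monomial (chi S) (sgn #S) := by
    rw [Finset.sum_powerset]
    simp
  have h2 : ∀ k, (∑ S ∈ Finset.powersetCard k (Finset.univ : Finset (Fin n)),
      MvPolynomial.monomial (chi S) (sgn #S)) =
      MvPolynomial.C (sgn k) * MvPolynomial.esymm (Fin n) ℤ k := by
    intro k
    rw [MvPolynomial.esymm_eq_sum_monomial, Finset.mul_sum]
    apply Finset.sum_congr rfl
    intro S hS
    rw [(Finset.mem_powersetCard_univ).mp hS, MvPolynomial.C_mul_monomial, mul_one, chi]
  rw [h1, Finset.sum_congr rfl (fun k _ => h2 k)]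
  have h4 : ∑ k ∈ Finset.range (n + 1), MvPolynomial.C (sgn k) * MvPolynomial.esymm (Fin n) ℤ k
      = ∑ k ∈ Finset.range (3 * (n + 1)),
          MvPolynomial.C (sgn k) * MvPolynomial.esymm (Fin n) ℤ k := by
    apply Finset.sum_subset (Finset.range_subset_range.mpr (by omega))
    intro k _ hk
    rw [Finset.mem_range, not_lt] at hk
    rw [esymm_eq_zero_of_gt (by omega), mul_zero]
  rw [h4, sum_range_three_mul]
  have h5 : ∀ m : ℕ, MvPolynomial.C (sgn (3*m)) * MvPolynomial.esymm (Fin n) ℤ (3*m) +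
      MvPolynomial.C (sgn (3*m+1)) * MvPolynomial.esymm (Fin n) ℤ (3*m+1) +
      MvPolynomial.C (sgn (3*m+2)) * MvPolynomial.esymm (Fin n) ℤ (3*m+2) =
      MvPolynomial.esymm (Fin n) ℤ (3*m) - MvPolynomial.esymm (Fin n) ℤ (3*m+1) := by
    intro m
    have e0 : sgn (3*m) = 1 := by unfold sgn; simp [Nat.mul_mod_right]
    have e1 : sgn (3*m+1) = -1 := by
      unfold sgn
      have : (3*m+1) % 3 = 1 := by omega
      simp [this]
    have e2 : sgn (3*m+2) = 0 := by
      unfold sgn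
      have : (3*m+2) % 3 = 2 := by omega
      simp [this]
    rw [e0, e1, e2, map_one, one_mul, map_neg, map_one, neg_one_mul, map_zero, zero_mul,
      add_zero, sub_eq_add_neg]
  rw [Finset.sum_congr rfl (fun m _ => h5 m)]
  have h6 : Finset.range (n + 1) = insert 0 (Finset.Icc 1 n) := by
    ext x
    simp only [Finset.mem_range, Finset.mem_insert, Finset.mem_Icc]
    omega
  rw [h6, Finset.sum_insert (by simp)]
  norm_num

end Aux123

/-- The generating function for words over `{1,...,n}` avoiding the consecutive
pattern `123` is `1/(1 - e₁ + e₃ - e₄ + e₆ - e₇ + e₉ - e₁₀ + ⋯)`. -/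
theorem words_avoiding_123_gf (n : ℕ) :
    wordAvoidGF 3 n *
      ((1 - MvPolynomial.esymm (Fin n) ℤ 1 +
        ∑ m ∈ Finset.Icc 1 n,
          (MvPolynomial.esymm (Fin n) ℤ (3 * m) -
            MvPolynomial.esymm (Fin n) ℤ (3 * m + 1)) :
        MvPolynomial (Fin n) ℤ) : MvPowerSeries (Fin n) ℤ) = 1 := by
  classical
  apply MvPowerSeries.ext
  intro d
  rw [Aux123.poly_eq]
  have hco : ((∑ S ∈ (Finset.univ : Finset (Fin n)).powerset,
        MvPolynomial.monomial (Aux123.chi S) (Aux123.sgn S.card) :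
          MvPolynomial (Fin n) ℤ) : MvPowerSeries (Fin n) ℤ) =
      ∑ S ∈ (Finset.univ : Finset (Fin n)).powerset,
        MvPowerSeries.monomial (Aux123.chi S) (Aux123.sgn S.card) := by
    rw [← MvPolynomial.coeToMvPowerSeries.ringHom_apply, map_sum]
    exact Finset.sum_congr rfl fun S _ => by
      rw [MvPolynomial.coeToMvPowerSeries.ringHom_apply, MvPolynomial.coe_monomial]
  rw [hco, Finset.mul_sum, map_sum]
  have hcf : ∀ e : Fin n →₀ ℕ,
      MvPowerSeries.coeff e (wordAvoidGF 3 n) = (Aux123.cf e : ℤ) := fun e => by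
    rw [← Aux123.wordAvoidCount_eq]; rfl
  have hterm : ∀ S ∈ (Finset.univ : Finset (Fin n)).powerset,
      MvPowerSeries.coeff d (wordAvoidGF 3 n *
          MvPowerSeries.monomial (Aux123.chi S) (Aux123.sgn S.card)) =
        Aux123.sgn S.card *
          (if Aux123.chi S ≤ d then (Aux123.cf (d - Aux123.chi S) : ℤ) else 0) := by
    intro S _
    rw [MvPowerSeries.coeff_mul_monomial]
    split_ifs with h
    · rw [hcf]; ring
    · ring
  rw [Finset.sum_congr rfl hterm, Aux123.main_sum, MvPowerSeries.coeff_one]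
end

section
/- (Gessel) For n ≥ 1 and r ≥ 2, the generating function F_r(x_1,...,x_n) = Σ_{m ∈ ℕ^n} f_r(m) x_1^{m_1}···x_n^{m_n}, where f_r(m) is the number of words with m_j copies of each letter j that avoid the consecutive pattern 12...r, equals 1/(1 - e_1 + Σ_{m≥1} (e_{mr} - e_{mr+1})), where e_k is the elementary symmetric polynomial of degree k in x_1,...,x_n (with e_k = 0 for k > n). -/
namespace GesselAux

open Finset List MvPolynomial



open Finset List

def g (r k : ℕ) : ℤ := if k % r = 0 then 1 else if k % r = 1 then -1 else 0

lemma g_zero (r : ℕ) : g r 0 = 1 := by simp [g]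

lemma g_one {r : ℕ} (hr : 2 ≤ r) : g r 1 = -1 := by
  have : 1 % r = 1 := Nat.mod_eq_of_lt (by omega)
  simp [g, this]

lemma g_mid {r k : ℕ} (h2 : 2 ≤ k) (hk : k < r) : g r k = 0 := by
  have : k % r = k := Nat.mod_eq_of_lt hk
  simp only [g, this]
  omega

lemma g_period (r k : ℕ) : g r (k + r) = g r k := by
  simp [g, Nat.add_mod_right]

lemma g_self {r : ℕ} (hr : 1 ≤ r) : g r r = 1 := by simp [g, Nat.mod_self]

lemma sum_g_Ico {r : ℕ} (hr : 2 ≤ r) : ∀ s : ℕ, 1 ≤ s →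
    ∑ p ∈ Finset.Ico s (s + r), g r p = 0 := by
  intro s hs
  induction s, hs using Nat.le_induction with
  | base =>
    rw [show 1 + r = r + 1 by omega, Finset.sum_Ico_succ_top (by omega)]
    have h1 : Finset.Ico 1 r = insert 1 (Finset.Ico 2 r) := by
      ext k; simp; omega
    rw [h1, Finset.sum_insert (by simp), g_one hr, g_self (by omega)]
    have : ∑ p ∈ Finset.Ico 2 r, g r p = 0 :=
      Finset.sum_eq_zero fun p hp => by
        simp only [Finset.mem_Ico] at hp; exact g_mid hp.1 hp.2
    rw [this]; ring
  | succ s hs ih =>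
    have h1 : Finset.Ico s (s + r) = insert s (Finset.Ico (s + 1) (s + r)) := by
      ext k; simp; omega
    rw [h1, Finset.sum_insert (by simp)] at ih
    rw [show s + 1 + r = (s + r) + 1 by omega, Finset.sum_Ico_succ_top (by omega),
      g_period]
    omega

lemma avoid_nil {α : Type*} [LT α] {r : ℕ} (hr : 1 ≤ r) : AvoidsInc r ([] : List α) := by
  rintro ⟨l, hinf, hlen, -⟩
  have h2 := hinf.length_le
  simp only [List.length_nil, Nat.le_zero] at h2
  omega

lemma avoid_suffix {α : Type*} [LT α] {r : ℕ} {u v : List α}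
    (h : AvoidsInc r u) (hs : v <:+ u) : AvoidsInc r v := by
  rintro ⟨l, hinf, hlen, hch⟩
  exact h ⟨l, hinf.trans hs.isInfix, hlen, hch⟩

lemma head?_take' {α : Type*} {x : List α} {k : ℕ} (hk : 1 ≤ k) :
    (x.take k).head? = x.head? := by
  cases x <;> cases k <;> simp_all

open scoped Classical in
lemma key {α : Type*} [LinearOrder α] {r : ℕ} (hr : 2 ≤ r) (u : List α) :
    ∑ p ∈ Finset.range (u.length + 1),
      (if (u.take p).Chain' (· < ·) ∧ AvoidsInc r (u.drop p) then g r p else 0)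
    = if u = [] then 1 else 0 := by
  by_cases hu : u = []
  · subst hu
    simp [avoid_nil (show (1:ℕ) ≤ r by omega), g_zero, List.Chain']
  · rw [if_neg hu]
    set L := u.length with hL
    have hL1 : 1 ≤ L := List.length_pos_iff.mpr hu
    set P1 : ℕ → Prop := fun p => (u.take p).Chain' (· < ·) with hP1def
    set a := Nat.findGreatest P1 L with ha
    have haL : a ≤ L := Nat.findGreatest_le L
    have hPa : P1 a := Nat.findGreatest_spec (Nat.zero_le L) (by simp [hP1def, List.Chain'])
    have hmono : ∀ p, p ≤ a → P1 p := by
      intro p hp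
      have h2 : u.take p = (u.take a).take p := by
        rw [List.take_take, min_eq_left hp]
      show (u.take p).Chain' (· < ·)
      rw [h2]
      exact hPa.prefix (List.take_prefix _ _)
    have hex : ∃ p, AvoidsInc r (u.drop p) :=
      ⟨L, by rw [hL, List.drop_length]; exact avoid_nil (by omega)⟩
    set p0 := Nat.find hex with hp0def
    have hP0 : AvoidsInc r (u.drop p0) := Nat.find_spec hex
    have hp0L : p0 ≤ L := Nat.find_min' hex (by rw [hL, List.drop_length]; exact avoid_nil (by omega))
    have hmono2 : ∀ p, p0 ≤ p → AvoidsInc r (u.drop p) := by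
      intro p hp
      have h1 : u.drop p = (u.drop p0).drop (p - p0) := by
        rw [List.drop_drop]; congr 1; omega
      exact avoid_suffix hP0 (h1 ▸ List.drop_suffix _ _)
    have hcond : ∀ p ∈ Finset.range (L + 1),
        (if (u.take p).Chain' (· < ·) ∧ AvoidsInc r (u.drop p) then g r p else 0)
        = if p ∈ Finset.Icc p0 a then g r p else 0 := by
      intro p hp
      rw [Finset.mem_range] at hp
      refine if_congr ?_ rfl rfl
      rw [Finset.mem_Icc]
      constructor
      · rintro ⟨h1, h2⟩
        exact ⟨Nat.find_min' hex h2, Nat.le_findGreatest (by omega) h1⟩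
      · rintro ⟨h1, h2⟩
        exact ⟨hmono p h2, hmono2 p h1⟩
    rw [Finset.sum_congr rfl hcond, Finset.sum_ite_mem]
    have hinter : Finset.range (L + 1) ∩ Finset.Icc p0 a = Finset.Icc p0 a := by
      ext k; simp only [Finset.mem_inter, Finset.mem_range, Finset.mem_Icc]
      omega
    rw [hinter]
    by_cases hcmp : a < p0
    · rw [Finset.Icc_eq_empty (by omega)]; simp
    push_neg at hcmp
    by_cases hp00 : p0 = 0
    · -- u itself avoids the pattern
      have havoid : AvoidsInc r u := by
        have := hP0; rw [hp00, List.drop_zero] at this; exact this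
      have ha1 : 1 ≤ a := by
        apply Nat.le_findGreatest hL1
        obtain ⟨x, v, rfl⟩ := List.exists_cons_of_ne_nil hu
        simp [hP1def, List.Chain']
      have har : a < r := by
        by_contra h; push_neg at h
        apply havoid
        refine ⟨u.take r, (List.take_prefix _ _).isInfix, ?_, ?_⟩
        · rw [List.length_take]; omega
        · have h2 : u.take r = (u.take a).take r := by
            rw [List.take_take, min_eq_left h]
          rw [h2]
          exact hPa.prefix (List.take_prefix _ _)
      rw [hp00]
      have hsplit : Finset.Icc 0 a = insert 0 (insert 1 (Finset.Icc 2 a)) := by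
        ext k; simp; omega
      rw [hsplit, Finset.sum_insert (by simp), Finset.sum_insert (by simp),
        g_zero, g_one hr]
      have : ∑ p ∈ Finset.Icc 2 a, g r p = 0 :=
        Finset.sum_eq_zero fun p hp => by
          rw [Finset.mem_Icc] at hp
          exact g_mid hp.1 (by omega)
      rw [this]; ring
    · -- 1 ≤ p0 ≤ a
      have hp01 : 1 ≤ p0 := by omega
      have hnot : ¬ AvoidsInc r (u.drop (p0 - 1)) := Nat.find_min hex (by omega)
      rw [AvoidsInc, not_not] at hnot
      obtain ⟨l, hinf, hlen, hch⟩ := hnot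
      obtain ⟨s, t, hst⟩ := hinf
      have hs : s = [] := by
        by_contra hsne
        obtain ⟨c, s', rfl⟩ := List.exists_cons_of_ne_nil hsne
        apply hP0
        refine ⟨l, ⟨s', t, ?_⟩, hlen, hch⟩
        have h1 : u.drop p0 = (u.drop (p0 - 1)).drop 1 := by
          rw [List.drop_drop]; congr 1; omega
        rw [h1, ← hst]
        simp
      subst hs
      rw [List.nil_append] at hst
      have hlpre : l <+: u.drop (p0 - 1) := ⟨t, hst⟩
      have hltake : l = (u.drop (p0 - 1)).take r := by
        have h2 := List.prefix_iff_eq_take.mp hlpre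
        rwa [hlen] at h2
      have hlenL : p0 - 1 + r ≤ L := by
        have h3 : l.length ≤ (u.drop (p0 - 1)).length := hlpre.length_le
        rw [hlen, List.length_drop] at h3
        omega
      have hage : p0 - 1 + r ≤ a := by
        apply Nat.le_findGreatest (by omega)
        show (u.take (p0 - 1 + r)).Chain' (· < ·)
        rw [List.take_add, ← hltake, List.Chain', List.isChain_append]
        refine ⟨hmono (p0 - 1) (by omega), hch, ?_⟩
        intro x hx y hy
        have hp0chain : (u.take p0).Chain' (· < ·) := hmono p0 hcmp
        have hsplit : u.take p0 = u.take (p0 - 1) ++ (u.drop (p0 - 1)).take 1 := by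
          rw [← List.take_add]; congr 1; omega
        rw [hsplit, List.Chain', List.isChain_append] at hp0chain
        apply hp0chain.2.2 x hx y
        rw [head?_take' le_rfl]
        rw [hltake, head?_take' (by omega)] at hy
        exact hy
      have hale : a ≤ p0 - 1 + r := by
        by_contra h; push_neg at h
        apply hP0
        refine ⟨(u.drop p0).take r, (List.take_prefix _ _).isInfix, ?_, ?_⟩
        · rw [List.length_take, List.length_drop]; omega
        · have h2 : (u.drop p0).take r = ((u.take a).drop p0).take r := by
            rw [List.drop_take, List.take_take, min_eq_left (by omega)]
          rw [h2]
          exact (hPa.suffix (List.drop_suffix _ _)).prefix (List.take_prefix _ _)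
      have hicc : Finset.Icc p0 a = Finset.Ico p0 (p0 + r) := by
        ext k; simp only [Finset.mem_Icc, Finset.mem_Ico]; omega
      rw [hicc, sum_g_Ico hr p0 hp01]




noncomputable def ind {n : ℕ} (S : Finset (Fin n)) : Fin n →₀ ℕ := ∑ i ∈ S, Finsupp.single i 1

lemma ind_apply {n : ℕ} (S : Finset (Fin n)) (j : Fin n) :
    ind S j = if j ∈ S then 1 else 0 := by
  classical
  simp [ind, Finsupp.single_apply, Finset.sum_apply', Finset.sum_ite_eq']

lemma prod_X_eq {n : ℕ} (S : Finset (Fin n)) :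
    (∏ i ∈ S, X i : MvPolynomial (Fin n) ℤ) = monomial (ind S) 1 := by
  classical
  induction S using Finset.induction_on with
  | empty => simp [ind]
  | @insert a s ha ih =>
    rw [Finset.prod_insert ha, ih,
      show (X a : MvPolynomial (Fin n) ℤ) = monomial (Finsupp.single a 1) 1 from rfl,
      monomial_mul, one_mul,
      show ind (insert a s) = Finsupp.single a 1 + ind s from Finset.sum_insert ha]

lemma esymm_big {n k : ℕ} (h : n < k) : esymm (Fin n) ℤ k = 0 := by
  rw [esymm, Finset.powersetCard_eq_empty.mpr (by simpa), Finset.sum_empty]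

lemma poly_eq {n r : ℕ} (hn : 1 ≤ n) (hr : 2 ≤ r) :
    (1 - esymm (Fin n) ℤ 1 + ∑ m ∈ Finset.Icc 1 n,
        (esymm (Fin n) ℤ (m * r) - esymm (Fin n) ℤ (m * r + 1)))
    = ∑ S : Finset (Fin n), monomial (ind S) (g r S.card) := by
  classical
  have hr0 : 0 < r := by omega
  -- RHS = ∑_{j ∈ range (n+1)} g r j • esymm j
  have hRHS : (∑ S : Finset (Fin n), monomial (ind S) (g r S.card))
      = ∑ j ∈ Finset.range (n + 1), g r j • esymm (Fin n) ℤ j := by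
    rw [← Finset.powerset_univ, Finset.sum_powerset]
    rw [show #(Finset.univ : Finset (Fin n)) = n by simp]
    refine Finset.sum_congr rfl fun j _ => ?_
    rw [esymm, Finset.smul_sum]
    refine Finset.sum_congr rfl fun S hS => ?_
    rw [Finset.mem_powersetCard] at hS
    rw [prod_X_eq, hS.2, smul_monomial, smul_eq_mul, mul_one]
  rw [hRHS]
  have hsplit : Finset.range (n + 1) = insert 0 (insert 1 (Finset.Ico 2 (n + 1))) := by
    ext k; simp; omega
  rw [hsplit, Finset.sum_insert (by simp), Finset.sum_insert (by simp)]
  have h0 : g r 0 • esymm (Fin n) ℤ 0 = 1 := by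
    simp [g, esymm_zero]
  have h1 : g r 1 • esymm (Fin n) ℤ 1 = -esymm (Fin n) ℤ 1 := by
    have : (1 : ℕ) % r = 1 := Nat.mod_eq_of_lt (by omega)
    simp [g, this]
  rw [h0, h1]
  have hsum : ∑ k ∈ Finset.Ico 2 (n + 1), g r k • esymm (Fin n) ℤ k
      = ∑ m ∈ Finset.Icc 1 n, (esymm (Fin n) ℤ (m * r) - esymm (Fin n) ℤ (m * r + 1)) := by
    have hterm : ∀ k ∈ Finset.Ico 2 (n + 1), g r k • esymm (Fin n) ℤ k
        = (if k % r = 0 then esymm (Fin n) ℤ k else 0)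
          - (if k % r = 1 then esymm (Fin n) ℤ k else 0) := by
      intro k _
      by_cases e0 : k % r = 0
      · have : ¬ k % r = 1 := by omega
        simp [g, e0, this]
      · by_cases e1 : k % r = 1
        · simp [g, e0, e1]
        · simp [g, e0, e1]
    rw [Finset.sum_congr rfl hterm, Finset.sum_sub_distrib, Finset.sum_sub_distrib]
    congr 1
    · -- A: multiples of r
      have hA : ∀ m ∈ Finset.Icc 1 n, esymm (Fin n) ℤ (m * r)
          = ∑ k ∈ Finset.Ico 2 (n + 1), if k = m * r then esymm (Fin n) ℤ k else 0 := by
        intro m hm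
        rw [Finset.mem_Icc] at hm
        rw [Finset.sum_ite_eq' (Finset.Ico 2 (n + 1)) (m * r) (esymm (Fin n) ℤ)]
        by_cases h : m * r ∈ Finset.Ico 2 (n + 1)
        · rw [if_pos h]
        · rw [if_neg h]
          rw [Finset.mem_Ico] at h
          have h2 : 2 ≤ m * r := le_trans (by omega) (Nat.mul_le_mul hm.1 hr)
          exact esymm_big (by omega)
      conv_rhs => rw [Finset.sum_congr rfl hA]
      rw [Finset.sum_comm]
      refine Finset.sum_congr rfl fun k hk => ?_
      rw [Finset.mem_Ico] at hk
      by_cases hd : k % r = 0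
      · rw [if_pos hd]
        have hdvd : r ∣ k := Nat.dvd_of_mod_eq_zero hd
        rw [Finset.sum_eq_single (k / r)]
        · rw [if_pos (Nat.div_mul_cancel hdvd).symm]
        · intro m _ hne
          rw [if_neg]
          intro h
          exact hne (by rw [h, Nat.mul_div_cancel _ hr0])
        · intro h
          exfalso; apply h
          rw [Finset.mem_Icc]
          have hrk : r ≤ k := Nat.le_of_dvd (by omega) hdvd
          exact ⟨Nat.one_le_div_iff hr0 |>.mpr hrk, le_trans (Nat.div_le_self _ _) (by omega)⟩
      · rw [if_neg hd]
        refine (Finset.sum_eq_zero fun m _ => ?_).symm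
        rw [if_neg]
        intro h
        exact hd (by rw [h, Nat.mul_mod_left])
    · -- B: ≡ 1 mod r
      have hB : ∀ m ∈ Finset.Icc 1 n, esymm (Fin n) ℤ (m * r + 1)
          = ∑ k ∈ Finset.Ico 2 (n + 1), if k = m * r + 1 then esymm (Fin n) ℤ k else 0 := by
        intro m hm
        rw [Finset.mem_Icc] at hm
        rw [Finset.sum_ite_eq' (Finset.Ico 2 (n + 1)) (m * r + 1) (esymm (Fin n) ℤ)]
        by_cases h : m * r + 1 ∈ Finset.Ico 2 (n + 1)
        · rw [if_pos h]
        · rw [if_neg h]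
          rw [Finset.mem_Ico] at h
          have h2 : 2 ≤ m * r := le_trans (by omega) (Nat.mul_le_mul hm.1 hr)
          exact esymm_big (by omega)
      conv_rhs => rw [Finset.sum_congr rfl hB]
      rw [Finset.sum_comm]
      refine Finset.sum_congr rfl fun k hk => ?_
      rw [Finset.mem_Ico] at hk
      by_cases hd : k % r = 1
      · rw [if_pos hd]
        have hkey : k / r * r + 1 = k := by
          have h3 := Nat.div_add_mod k r
          have h4 : k / r * r = r * (k / r) := Nat.mul_comm _ _
          omega
        rw [Finset.sum_eq_single (k / r)]
        · rw [if_pos hkey.symm]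
        · intro m _ hne
          rw [if_neg]
          intro h
          apply hne
          have : m * r = k / r * r := by omega
          exact Nat.eq_of_mul_eq_mul_right hr0 this
        · intro h
          exfalso; apply h
          rw [Finset.mem_Icc]
          constructor
          · rcases Nat.eq_zero_or_pos (k / r) with h0 | h0
            · rw [h0] at hkey; simp at hkey; omega
            · exact h0
          · exact le_trans (Nat.div_le_self _ _) (by omega)
      · rw [if_neg hd]
        refine (Finset.sum_eq_zero fun m _ => ?_).symm
        rw [if_neg]
        intro h
        apply hd
        rw [h, Nat.add_mod, Nat.mul_mod_left]
        simp [Nat.mod_eq_of_lt (show 1 < r by omega)]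
  rw [hsum]
  ring




open Finset List

/-- all words over `Fin n` of length `L`, as a finset -/
noncomputable def WL (n L : ℕ) : Finset (List (Fin n)) :=
  (Finset.univ : Finset (List.Vector (Fin n) L)).image List.Vector.toList

lemma mem_WL {n L : ℕ} {w : List (Fin n)} : w ∈ WL n L ↔ w.length = L := by
  simp only [WL, Finset.mem_image, Finset.mem_univ, true_and]
  constructor
  · rintro ⟨v, rfl⟩; exact v.2
  · intro h; exact ⟨⟨w, h⟩, rfl⟩

lemma length_of_count {n : ℕ} {w : List (Fin n)} {m : Fin n →₀ ℕ}
    (h : ∀ j, w.count j = m j) : w.length = m.sum fun _ k => k := by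
  have h1 : w.length = ∑ j : Fin n, w.count j := by
    have h2 := Multiset.sum_count_eq_card (s := (Finset.univ : Finset (Fin n)))
      (m := (↑w : Multiset (Fin n))) (fun a _ => Finset.mem_univ a)
    simpa using h2.symm
  rw [h1, Finsupp.sum_fintype _ _ (fun _ => rfl)]
  exact Finset.sum_congr rfl fun j _ => h j

open scoped Classical in
noncomputable def WC (r n : ℕ) (m : Fin n →₀ ℕ) : Finset (List (Fin n)) :=
  (WL n (m.sum fun _ k => k)).filter (fun w => (∀ j, w.count j = m j) ∧ AvoidsInc r w)

open scoped Classical in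
lemma card_WC (r n : ℕ) (m : Fin n →₀ ℕ) : wordAvoidCount r n ⇑m = (WC r n m).card := by
  have hset : {w : List (Fin n) | (∀ j, w.count j = m j) ∧ AvoidsInc r w} = ↑(WC r n m) := by
    ext w
    simp only [Set.mem_setOf_eq, WC, Finset.coe_filter, Finset.mem_coe, Set.mem_setOf_eq,
      mem_WL]
    constructor
    · intro h; exact ⟨length_of_count h.1, h⟩
    · intro h; exact h.2
  rw [wordAvoidCount]
  have : Nat.card {w : List (Fin n) // (∀ j, w.count j = m j) ∧ AvoidsInc r w}
      = Nat.card {w : List (Fin n) | (∀ j, w.count j = m j) ∧ AvoidsInc r w} := rfl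
  rw [this, hset, Nat.card_coe_set_eq, Set.ncard_coe_finset]




lemma sum_ind {n : ℕ} (S : Finset (Fin n)) : ∑ j, ind S j = S.card := by
  classical
  rw [Finset.sum_congr rfl fun j _ => ind_apply S j]
  simp [Finset.sum_ite_mem]

lemma sum_d {n : ℕ} (d : Fin n →₀ ℕ) : d.sum (fun _ k => k) = ∑ j, d j :=
  Finsupp.sum_fintype _ _ (fun _ => rfl)

lemma count_sort {n : ℕ} (S : Finset (Fin n)) (j : Fin n) :
    (S.sort (· ≤ ·)).count j = if j ∈ S then 1 else 0 := by
  rw [List.Nodup.count (Finset.sort_nodup _ _)]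
  simp [Finset.mem_sort]

lemma chain'_sort {n : ℕ} (S : Finset (Fin n)) :
    (S.sort (· ≤ ·)).Chain' (· < ·) :=
  List.sortedLT_iff_isChain.mp (Finset.sortedLT_sort S)

open scoped Classical in
lemma main_sum {n r : ℕ} (hr : 2 ≤ r) (d : Fin n →₀ ℕ) :
    (∑ S : Finset (Fin n),
      if ind S ≤ d then (wordAvoidCount r n ⇑(d - ind S) : ℤ) * g r S.card else 0)
    = if d = 0 then 1 else 0 := by
  set N := d.sum (fun _ k => k) with hN
  -- the per-S finset of words
  set AW : Finset (Fin n) → Finset (List (Fin n)) := fun S =>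
    (WL n (N - S.card)).filter
      (fun w => (∀ j, w.count j + ind S j = d j) ∧ AvoidsInc r w) with hAW
  have step1 : ∀ S : Finset (Fin n),
      (if ind S ≤ d then (wordAvoidCount r n ⇑(d - ind S) : ℤ) * g r S.card else 0)
      = ∑ w ∈ AW S, g r S.card := by
    intro S
    by_cases h : ind S ≤ d
    · have hle : ∀ j, ind S j ≤ d j := fun j => h j
      have hsub : ∀ j, (d - ind S) j = d j - ind S j := fun j => Finsupp.tsub_apply d (ind S) j
      have hsum : (d - ind S).sum (fun _ k => k) = N - S.card :=
        calc (d - ind S).sum (fun _ k => k) = ∑ j, (d - ind S) j := sum_d _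
        _ = ∑ j, (d j - ind S j) := Finset.sum_congr rfl fun j _ => hsub j
        _ = (∑ j, d j) - ∑ j, ind S j := Finset.sum_tsub_distrib Finset.univ fun j _ => hle j
        _ = N - S.card := by rw [← sum_d, ← hN, sum_ind]
      have hWCeq : WC r n (d - ind S) = AW S := by
        rw [WC, hAW, hsum]
        refine Finset.filter_congr fun w hw => ?_
        constructor
        · rintro ⟨h1, h2⟩
          exact ⟨fun j => by have := h1 j; rw [hsub j] at this; have := hle j; omega, h2⟩
        · rintro ⟨h1, h2⟩
          exact ⟨fun j => by rw [hsub j]; have := h1 j; omega, h2⟩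
      rw [if_pos h, card_WC, hWCeq, Finset.sum_const, nsmul_eq_mul]
    · rw [if_neg h]
      have hAWe : AW S = ∅ := by
        rw [Finset.eq_empty_iff_forall_notMem]
        intro w hw
        rw [hAW, Finset.mem_filter] at hw
        exact h fun j => by have := hw.2.1 j; omega
      rw [hAWe, Finset.sum_empty]
  rw [Finset.sum_congr rfl fun S _ => step1 S]
  -- convert to a sum over a sigma finset and biject
  rw [Finset.sum_sigma' Finset.univ AW (fun S _w => g r S.card)]
  set CW : Finset (List (Fin n)) :=
    (WL n N).filter (fun u => ∀ j, u.count j = d j) with hCW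
  set PV : List (Fin n) → Finset ℕ := fun u =>
    (Finset.range (u.length + 1)).filter
      (fun p => (u.take p).Chain' (· < ·) ∧ AvoidsInc r (u.drop p)) with hPV
  have step2 : (∑ x ∈ Finset.univ.sigma AW, g r x.1.card)
      = ∑ y ∈ CW.sigma PV, g r y.2 := by
    refine Finset.sum_bij'
      (fun x _ => (⟨x.1.sort (· ≤ ·) ++ x.2, x.1.card⟩ : (_ : List (Fin n)) × ℕ))
      (fun y _ => (⟨(y.1.take y.2).toFinset, y.1.drop y.2⟩ : (_ : Finset (Fin n)) × List (Fin n)))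
      ?_ ?_ ?_ ?_ ?_
    · -- maps into CW.sigma PV
      rintro ⟨S, w⟩ hx
      rw [Finset.mem_sigma] at hx
      dsimp only at hx ⊢
      have hw := hx.2
      rw [hAW, Finset.mem_filter, mem_WL] at hw
      obtain ⟨hwlen, hwcount, hwavoid⟩ := hw
      have hcount : ∀ j, (S.sort (· ≤ ·) ++ w).count j = d j := by
        intro j
        rw [List.count_append, count_sort, ← ind_apply]
        have := hwcount j; omega
      rw [Finset.mem_sigma]
      dsimp only
      constructor
      · rw [hCW, Finset.mem_filter, mem_WL]
        exact ⟨(length_of_count hcount).trans hN.symm, hcount⟩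
      · rw [hPV, Finset.mem_filter, Finset.mem_range]
        have hslen : (S.sort (· ≤ ·)).length = S.card := Finset.length_sort _
        refine ⟨by rw [List.length_append, hslen]; omega, ?_, ?_⟩
        · rw [List.take_left' hslen]
          exact chain'_sort S
        · rw [List.drop_left' hslen]
          exact hwavoid
    · -- reverse maps into univ.sigma AW
      rintro ⟨u, p⟩ hy
      rw [Finset.mem_sigma] at hy
      dsimp only at hy ⊢
      obtain ⟨hu, hp⟩ := hy
      rw [hCW, Finset.mem_filter, mem_WL] at hu
      rw [hPV, Finset.mem_filter, Finset.mem_range] at hp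
      obtain ⟨hplen, hchain, havoid⟩ := hp
      have hnodup : (u.take p).Nodup :=
        ((List.isChain_iff_pairwise.mp hchain).imp fun h => ne_of_lt h)
      have hcardS : (u.take p).toFinset.card = p := by
        rw [List.toFinset_card_of_nodup hnodup, List.length_take]
        omega
      rw [Finset.mem_sigma]
      refine ⟨Finset.mem_univ _, ?_⟩
      rw [hAW, Finset.mem_filter, mem_WL]
      have hindc : ∀ j, ind (u.take p).toFinset j = (u.take p).count j := by
        intro j
        rw [ind_apply, List.Nodup.count hnodup]
        simp
      refine ⟨?_, fun j => ?_, ?_⟩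
      · rw [List.length_drop, hu.1, hcardS]
      · rw [hindc j, Nat.add_comm, ← List.count_append, List.take_append_drop]
        exact hu.2 j
      · rintro ⟨l, hinf, hlen, hch⟩
        exact havoid ⟨l, hinf, hlen, hch⟩
    · -- left inverse
      rintro ⟨S, w⟩ hx
      rw [Finset.mem_sigma] at hx
      dsimp only at hx ⊢
      have hslen : (S.sort (· ≤ ·)).length = S.card := Finset.length_sort _
      have h1 : ((S.sort (· ≤ ·) ++ w).take S.card).toFinset = S := by
        rw [List.take_left' hslen, Finset.sort_toFinset]
      have h2 : (S.sort (· ≤ ·) ++ w).drop S.card = w := List.drop_left' hslen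
      rw [h1, h2]
    · -- right inverse
      rintro ⟨u, p⟩ hy
      rw [Finset.mem_sigma] at hy
      dsimp only at hy ⊢
      obtain ⟨hu, hp⟩ := hy
      rw [hPV, Finset.mem_filter, Finset.mem_range] at hp
      obtain ⟨hplen, hchain, _⟩ := hp
      have hnodup : (u.take p).Nodup :=
        ((List.isChain_iff_pairwise.mp hchain).imp fun h => ne_of_lt h)
      have hsorted : (u.take p).Pairwise (· ≤ ·) :=
        (List.isChain_iff_pairwise.mp hchain).imp fun h => le_of_lt h
      have hsort : (u.take p).toFinset.sort (· ≤ ·) = u.take p :=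
        (List.toFinset_sort (· ≤ ·) hnodup).mpr hsorted
      have hcardS : (u.take p).toFinset.card = p := by
        rw [List.toFinset_card_of_nodup hnodup, List.length_take]
        omega
      rw [hsort, List.take_append_drop, hcardS]
    · -- values agree
      rintro ⟨S, w⟩ _
      rfl
  rw [step2, Finset.sum_sigma]
  have step3 : ∀ u ∈ CW, (∑ p ∈ PV u, g r p) = if u = [] then 1 else 0 := by
    intro u _
    rw [hPV, Finset.sum_filter, key hr u]
  rw [Finset.sum_congr rfl step3]
  by_cases hd : d = 0
  · rw [if_pos hd]
    have hCW0 : CW = {[]} := by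
      rw [hCW]
      ext u
      simp only [Finset.mem_filter, mem_WL, Finset.mem_singleton]
      constructor
      · rintro ⟨h1, _⟩
        rw [← List.length_eq_zero_iff]
        rw [h1, hN, hd]
        simp
      · rintro rfl
        subst hd
        simp [hN]
    rw [hCW0, Finset.sum_singleton, if_pos rfl]
  · rw [if_neg hd]
    apply Finset.sum_eq_zero
    intro u hu
    rw [if_neg]
    rintro rfl
    apply hd
    rw [hCW, Finset.mem_filter] at hu
    ext j
    have := hu.2 j
    simpa using this.symm



end GesselAux

open GesselAux in
/-- (Gessel) `F_r = 1/(1 - e_1 + ∑_{m ≥ 1} (e_{mr} - e_{mr+1}))`. -/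
theorem gessel_theorem (n r : ℕ) (hn : 1 ≤ n) (hr : 2 ≤ r) :
    wordAvoidGF r n *
      ((1 - MvPolynomial.esymm (Fin n) ℤ 1 +
        ∑ m ∈ Finset.Icc 1 n,
          (MvPolynomial.esymm (Fin n) ℤ (m * r) -
            MvPolynomial.esymm (Fin n) ℤ (m * r + 1)) :
        MvPolynomial (Fin n) ℤ) : MvPowerSeries (Fin n) ℤ) = 1 := by
  classical
  rw [poly_eq hn hr]
  have hQ : ((↑(∑ S : Finset (Fin n), MvPolynomial.monomial (ind S) (g r S.card)) :
        MvPowerSeries (Fin n) ℤ))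
      = ∑ S : Finset (Fin n),
          ((MvPolynomial.monomial (ind S) (g r S.card) : MvPolynomial (Fin n) ℤ) :
            MvPowerSeries (Fin n) ℤ) :=
    map_sum MvPolynomial.coeToMvPowerSeries.ringHom _ _
  rw [hQ, Finset.mul_sum]
  apply MvPowerSeries.ext
  intro d
  rw [map_sum (MvPowerSeries.coeff d)]
  have hterm : ∀ S : Finset (Fin n),
      MvPowerSeries.coeff d
          (wordAvoidGF r n * ((MvPolynomial.monomial (ind S) (g r S.card) : MvPolynomial (Fin n) ℤ) :
            MvPowerSeries (Fin n) ℤ))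
      = if ind S ≤ d then (wordAvoidCount r n ⇑(d - ind S) : ℤ) * g r S.card else 0 := by
    intro S
    rw [MvPolynomial.coe_monomial, MvPowerSeries.coeff_mul_monomial]
    have : MvPowerSeries.coeff (d - ind S) (wordAvoidGF r n)
        = (wordAvoidCount r n ⇑(d - ind S) : ℤ) := rfl
    rw [this]
  rw [Finset.sum_congr rfl fun S _ => hterm S, main_sum hr d, MvPowerSeries.coeff_one]
end

section
/- Let f_r(m) be the number of words over {1,...,n} with multiplicity vector m = (m_1,...,m_n) avoiding the consecutive pattern 12...r, and let V_k be the set of 0-1 vectors of length n with exactly k ones. Then for m ≠ 0 with all m_i ≥ 0: f_r(m) = Σ_{v∈V_1} f_r(m-v) + Σ_{j≥1} [ -Σ_{v∈V_{jr}} f_r(m-v) + Σ_{v∈V_{jr+1}} f_r(m-v) ], where f_r evaluated at any vector with a negative entry is 0 and f_r(0,...,0) = 1. -/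
/-- `f_r(m - v)` where `v` is the 0-1 indicator vector of the set `S`;
it is `0` if some coordinate of `m - v` would be negative. -/
noncomputable def wordAvoidCountSub (r n : ℕ) (m : Fin n → ℕ) (S : Finset (Fin n)) : ℤ :=
  if ∀ i ∈ S, 1 ≤ m i then
    (wordAvoidCount r n (fun i => m i - (if i ∈ S then 1 else 0)) : ℤ)
  else 0

open List Finset

/-! ### Auxiliary definitions -/

/-- `w` decomposes as `u ++ v` where `v` is strictly increasing of length `k`
and `u` avoids the pattern. -/
def DecompB {α : Type*} [LT α] (r k : ℕ) (w : List α) : Prop :=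
  ∃ u v : List α, w = u ++ v ∧ v.length = k ∧ v.Chain' (· < ·) ∧ AvoidsInc r u

lemma AvoidsInc.of_infix {α : Type*} [LT α] {r : ℕ} {u w : List α}
    (h : AvoidsInc r w) (hu : u <:+: w) : AvoidsInc r u := by
  rintro ⟨l, hl, h2, h3⟩
  exact h ⟨l, hl.trans hu, h2, h3⟩

lemma avoidsInc_nil {α : Type*} [LT α] {r : ℕ} (hr : 1 ≤ r) : AvoidsInc r ([] : List α) := by
  rintro ⟨l, hl, h2, h3⟩
  have := hl.sublist.length_le
  simp only [length_nil] at this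
  omega

lemma chain'_of_length_le_one {α : Type*} {R : α → α → Prop} {l : List α}
    (h : l.length ≤ 1) : l.Chain' R := by
  match l with
  | [] => exact List.isChain_nil
  | [a] => exact List.isChain_singleton a
  | a :: b :: t => simp at h

/-- characterization of `Chain'` on a suffix, by indices in the ambient list -/
lemma chain'_drop_iff {α : Type*} {R : α → α → Prop} (w : List α) (a : ℕ) :
    (w.drop a).Chain' R ↔
      ∀ i, a ≤ i → ∀ h : i + 1 < w.length, R (w[i]'(by omega)) (w[i+1]'h) := by
  rw [List.Chain', List.isChain_iff_getElem]
  constructor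
  · intro H i hai h
    have h2 : i - a < (w.drop a).length - 1 := by
      simp only [List.length_drop]; omega
    have := H (i - a) (by omega)
    simp only [List.get_eq_getElem, List.getElem_drop] at this
    convert this using 2 <;> omega
  · intro H i hi
    simp only [List.length_drop] at hi
    simp only [List.get_eq_getElem, List.getElem_drop]
    have := H (a + i) (by omega) (by omega)
    convert this using 2 <;> omega

section words

variable {n : ℕ}

lemma sum_count_univ (w : List (Fin n)) : ∑ j, w.count j = w.length := by
  have := Multiset.sum_count_eq_card (s := Finset.univ) (m := (↑w : Multiset (Fin n)))
    (fun a _ => Finset.mem_univ a)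
  simpa using this

lemma length_of_counts {m : Fin n → ℕ} {w : List (Fin n)} (h : ∀ j, w.count j = m j) :
    w.length = ∑ j, m j := by
  rw [← sum_count_univ w]
  exact Finset.sum_congr rfl fun j _ => h j

lemma words_finite (m : Fin n → ℕ) : {w : List (Fin n) | ∀ j, w.count j = m j}.Finite :=
  (List.finite_length_eq (Fin n) (∑ j, m j)).subset fun w hw => length_of_counts hw

/-- The finite set of words with multiplicity vector `m`. -/
noncomputable def wordsF (n : ℕ) (m : Fin n → ℕ) : Finset (List (Fin n)) :=
  (words_finite m).toFinset

lemma mem_wordsF {m : Fin n → ℕ} {w : List (Fin n)} :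
    w ∈ wordsF n m ↔ ∀ j, w.count j = m j := Set.Finite.mem_toFinset _

open Classical in
lemma wordAvoidCount_eq (r : ℕ) (m : Fin n → ℕ) :
    wordAvoidCount r n m = ((wordsF n m).filter (fun w => AvoidsInc r w)).card := by
  have hfin : {w : List (Fin n) | (∀ j, w.count j = m j) ∧ AvoidsInc r w}.Finite :=
    (words_finite m).subset fun w hw => hw.1
  have h0 : wordAvoidCount r n m
      = {w : List (Fin n) | (∀ j, w.count j = m j) ∧ AvoidsInc r w}.ncard :=
    Nat.card_coe_set_eq _
  rw [h0, Set.ncard_eq_toFinset_card _ hfin]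
  congr 1
  ext w
  simp [Set.Finite.mem_toFinset, wordsF, and_comm]

lemma chain'_sort (S : Finset (Fin n)) : (S.sort (· ≤ ·)).Chain' (· < ·) :=
  List.sortedLT_iff_isChain.1 (Finset.sortedLT_sort S)

lemma nodup_of_chain'_lt {v : List (Fin n)} (hv : v.Chain' (· < ·)) : v.Nodup :=
  (List.isChain_iff_pairwise.1 hv).imp ne_of_lt

lemma eq_sort_of_chain' {S : Finset (Fin n)} {v : List (Fin n)}
    (hv : v.Chain' (· < ·)) (hS : v.toFinset = S) : v = S.sort (· ≤ ·) := by
  haveI : Std.Antisymm (α := Fin n) (· < ·) := ⟨fun a b h h' => absurd h' (asymm h)⟩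
  exact List.Perm.eq_of_pairwise'
      (List.isChain_iff_pairwise.1 hv) (List.sortedLT_iff_pairwise.1 (Finset.sortedLT_sort S))
    (List.perm_of_nodup_nodup_toFinset_eq (nodup_of_chain'_lt hv) (S.sort_nodup _)
      (by rw [hS, Finset.sort_toFinset]))

lemma count_sort (S : Finset (Fin n)) (j : Fin n) :
    (S.sort (· ≤ ·)).count j = if j ∈ S then 1 else 0 := by
  by_cases h : j ∈ S
  · simp only [h, if_true]
    exact List.count_eq_one_of_mem (S.sort_nodup _) ((Finset.mem_sort _).2 h)
  · simp only [h, if_false]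
    exact List.count_eq_zero.2 fun hc => h ((Finset.mem_sort _).1 hc)

open Classical in
lemma key_count (r : ℕ) (m : Fin n → ℕ) (k : ℕ) (hk : 1 ≤ k) :
    ∑ S ∈ Finset.powersetCard k (Finset.univ : Finset (Fin n)), wordAvoidCountSub r n m S
      = (((wordsF n m).filter (fun w => DecompB r k w)).card : ℤ) := by
  have hdropv : ∀ (u v : List (Fin n)), v.length = k →
      (u ++ v).drop ((u ++ v).length - k) = v := by
    intro u v hvl
    have : (u ++ v).length - k = u.length := by
      rw [List.length_append, hvl]; omega
    rw [this, List.drop_left]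
  have htakeu : ∀ (u v : List (Fin n)), v.length = k →
      (u ++ v).take ((u ++ v).length - k) = u := by
    intro u v hvl
    have : (u ++ v).length - k = u.length := by
      rw [List.length_append, hvl]; omega
    rw [this, List.take_left]
  have hfib : ∀ w ∈ (wordsF n m).filter (fun w => DecompB r k w),
      (w.drop (w.length - k)).toFinset ∈ Finset.powersetCard k (Finset.univ : Finset (Fin n)) := by
    intro w hw
    rw [Finset.mem_filter] at hw
    obtain ⟨u, v, rfl, hvl, hvc, hua⟩ := hw.2
    rw [hdropv u v hvl, Finset.mem_powersetCard]
    exact ⟨Finset.subset_univ _,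
      by rw [List.toFinset_card_of_nodup (nodup_of_chain'_lt hvc), hvl]⟩
  rw [Finset.card_eq_sum_card_fiberwise hfib]
  push_cast
  refine Finset.sum_congr rfl fun S hS => ?_
  rw [Finset.mem_powersetCard] at hS
  rw [Finset.filter_filter]
  by_cases hgood : ∀ i ∈ S, 1 ≤ m i
  · rw [wordAvoidCountSub, if_pos hgood, wordAvoidCount_eq]
    have lvs : (S.sort (· ≤ ·)).length = k := by rw [Finset.length_sort]; exact hS.2
    norm_cast
    apply Finset.card_bij' (fun u _ => u ++ S.sort (· ≤ ·))
        (fun w _ => w.take (w.length - k))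
    · -- hi
      intro u hu
      rw [Finset.mem_filter] at hu
      obtain ⟨hum, hua⟩ := hu
      rw [mem_wordsF] at hum
      rw [Finset.mem_filter, mem_wordsF]
      refine ⟨fun j => ?_, ⟨u, S.sort (· ≤ ·), rfl, lvs, chain'_sort S, hua⟩, ?_⟩
      · rw [List.count_append, hum j, count_sort]
        by_cases h : j ∈ S
        · have := hgood j h
          simp only [h, if_true]
          omega
        · simp [h]
      · rw [hdropv u _ lvs, Finset.sort_toFinset]
    · -- hj
      intro w hw
      rw [Finset.mem_filter, mem_wordsF] at hw
      obtain ⟨hwm, ⟨u, v, rfl, hvl, hvc, hua⟩, hfS⟩ := hw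
      rw [hdropv u v hvl] at hfS
      rw [htakeu u v hvl, Finset.mem_filter, mem_wordsF]
      refine ⟨fun j => ?_, hua⟩
      have hcv : List.count j v = if j ∈ S then 1 else 0 := by
        rw [eq_sort_of_chain' hvc hfS, count_sort]
      have := hwm j
      rw [List.count_append, hcv] at this
      by_cases h : j ∈ S <;> simp only [h, if_true, if_false] at this ⊢ <;> omega
    · intro u hu
      rw [htakeu u _ lvs]
    · intro w hw
      rw [Finset.mem_filter, mem_wordsF] at hw
      obtain ⟨hwm, ⟨u, v, rfl, hvl, hvc, hua⟩, hfS⟩ := hw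
      rw [hdropv u v hvl] at hfS
      rw [htakeu u v hvl, eq_sort_of_chain' hvc hfS]
  · rw [wordAvoidCountSub, if_neg hgood]
    symm
    rw [Nat.cast_eq_zero, Finset.card_eq_zero, Finset.filter_eq_empty_iff]
    push_neg at hgood
    obtain ⟨i, hiS, him⟩ := hgood
    intro w hw
    rw [mem_wordsF] at hw
    rintro ⟨-, hfS⟩
    have : i ∈ w.drop (w.length - k) := by
      rw [← List.mem_toFinset, hfS]; exact hiS
    have : i ∈ w := (List.drop_subset _ _) this
    have := List.count_pos_iff.2 this
    rw [hw i] at this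
    omega

end words

/-! ### The per-word identity -/

open Classical in
lemma arith_lemma (r n k0 s : ℕ) (hr : 1 ≤ r) (h1 : 1 ≤ k0) (h2 : k0 ≤ s)
    (h3 : s + 1 = k0 + r) (h4 : s ≤ n) :
    (0 : ℤ) = (if k0 ≤ 1 ∧ 1 ≤ s then (1:ℤ) else 0) +
      ∑ j ∈ Finset.Icc 1 n,
        (-(if k0 ≤ j*r ∧ j*r ≤ s then (1:ℤ) else 0) +
          (if k0 ≤ j*r+1 ∧ j*r+1 ≤ s then (1:ℤ) else 0)) := by
  have huniq : ∀ (a : ℕ), 1 ≤ a → ∀ j j' : ℕ, a ≤ j*r → j*r ≤ a + r - 1 →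
      a ≤ j'*r → j'*r ≤ a + r - 1 → j = j' := by
    intro a ha j j' h1 h2 h3 h4
    rcases lt_trichotomy j j' with h | h | h
    · have : (j+1) * r ≤ j' * r := Nat.mul_le_mul_right r (by omega)
      rw [add_mul, one_mul] at this
      omega
    · exact h
    · have : (j'+1) * r ≤ j * r := Nat.mul_le_mul_right r (by omega)
      rw [add_mul, one_mul] at this
      omega
  have hsum : ∀ (a : ℕ), 1 ≤ a → a + r - 1 ≤ n →
      (∑ j ∈ Finset.Icc 1 n, (if a ≤ j*r ∧ j*r ≤ a + r - 1 then (1:ℤ) else 0)) = 1 := by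
    intro a ha han
    have hq := Nat.div_add_mod (a + r - 1) r
    have hqlt := Nat.mod_lt (a + r - 1) (show 0 < r by omega)
    set q := (a + r - 1) / r with hqdef
    have hc : q * r = r * q := Nat.mul_comm q r
    have hql : a ≤ q * r := by
      have h2 : a + r - 1 < r * (q + 1) := Nat.lt_mul_div_succ _ (by omega)
      omega
    have hqu : q * r ≤ a + r - 1 := by omega
    have hq1 : 1 ≤ q := by
      rcases Nat.eq_zero_or_pos q with h0 | h0
      · rw [h0, zero_mul] at hql; omega
      · exact h0
    have hqn : q ≤ n := le_trans (le_trans (Nat.le_mul_of_pos_right q (by omega)) hqu) han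
    have hfq : Finset.filter (fun j => a ≤ j*r ∧ j*r ≤ a + r - 1) (Finset.Icc 1 n) = {q} := by
      apply Finset.eq_singleton_iff_unique_mem.2
      constructor
      · rw [Finset.mem_filter, Finset.mem_Icc]
        exact ⟨⟨hq1, hqn⟩, hql, hqu⟩
      · intro j hj
        rw [Finset.mem_filter] at hj
        exact huniq a ha j q hj.2.1 hj.2.2 hql hqu
    rw [Finset.sum_boole, hfq, Finset.card_singleton]
    norm_num
  have hs_eq : s = k0 + r - 1 := by omega
  rw [Finset.sum_add_distrib, Finset.sum_neg_distrib]
  have hA : (∑ j ∈ Finset.Icc 1 n, (if k0 ≤ j*r ∧ j*r ≤ s then (1:ℤ) else 0)) = 1 := by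
    rw [show s = k0 + r - 1 from hs_eq]
    exact hsum k0 h1 (by omega)
  rw [hA]
  by_cases hk01 : k0 = 1
  · have hB : (∑ j ∈ Finset.Icc 1 n, (if k0 ≤ j*r+1 ∧ j*r+1 ≤ s then (1:ℤ) else 0)) = 0 := by
      apply Finset.sum_eq_zero
      intro j hj
      rw [Finset.mem_Icc] at hj
      rw [if_neg]
      rintro ⟨-, h⟩
      have : 1 * r ≤ j * r := Nat.mul_le_mul_right r hj.1
      omega
    rw [hB, if_pos ⟨by omega, by omega⟩]
    ring
  · have hB : (∑ j ∈ Finset.Icc 1 n, (if k0 ≤ j*r+1 ∧ j*r+1 ≤ s then (1:ℤ) else 0)) = 1 := by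
      have : ∀ j ∈ Finset.Icc 1 n, (if k0 ≤ j*r+1 ∧ j*r+1 ≤ s then (1:ℤ) else 0)
          = (if (k0-1) ≤ j*r ∧ j*r ≤ (k0-1) + r - 1 then (1:ℤ) else 0) := by
        intro j hj
        apply if_congr _ rfl rfl
        constructor <;> rintro ⟨ha, hb⟩ <;> exact ⟨by omega, by omega⟩
      rw [Finset.sum_congr rfl this]
      exact hsum (k0-1) (by omega) (by omega)
    rw [hB, if_neg (by omega)]
    ring

open Classical in
lemma per_word (r n : ℕ) (hr : 2 ≤ r) (w : List (Fin n)) (hw : w ≠ []) :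
    (if AvoidsInc r w then (1:ℤ) else 0) =
      (if DecompB r 1 w then (1:ℤ) else 0) +
      ∑ j ∈ Finset.Icc 1 n,
        (-(if DecompB r (j*r) w then (1:ℤ) else 0) +
          (if DecompB r (j*r+1) w then (1:ℤ) else 0)) := by
  have hL : 1 ≤ w.length := List.length_pos_iff.2 hw
  set L := w.length with hLdef
  set Q : ℕ → Prop := fun k => (w.drop (L - k)).Chain' (· < ·) with hQdef
  set P : ℕ → Prop := fun k => AvoidsInc r (w.take (L - k)) with hPdef
  have hPL : P L := by
    show AvoidsInc r (w.take (L - L))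
    rw [Nat.sub_self, List.take_zero]
    exact avoidsInc_nil (by omega)
  have hPex : ∃ k, P k := ⟨L, hPL⟩
  set k0 := Nat.find hPex with hk0def
  have hPk0 : P k0 := Nat.find_spec hPex
  have hk0min : ∀ k, P k → k0 ≤ k := fun k hk => Nat.find_min' hPex hk
  have hk0L : k0 ≤ L := hk0min L hPL
  have hQ1 : Q 1 := by
    show (w.drop (L - 1)).Chain' (· < ·)
    apply chain'_of_length_le_one
    rw [List.length_drop]
    omega
  set s := Nat.findGreatest Q L with hsdef
  have hQs : Q s := Nat.findGreatest_spec hL hQ1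
  have hsL : s ≤ L := Nat.findGreatest_le L
  have hs1 : 1 ≤ s := Nat.le_findGreatest hL hQ1
  have hsmax : ∀ k, k ≤ L → Q k → k ≤ s := fun k hk hQk => Nat.le_findGreatest hk hQk
  have hQmono : ∀ k, k ≤ s → Q k := by
    intro k hk
    show (w.drop (L - k)).Chain' (· < ·)
    have h1 : w.drop (L - k) = (w.drop (L - s)).drop (s - k) := by
      rw [List.drop_drop]
      congr 1
      omega
    rw [h1]
    exact hQs.sublist (List.drop_sublist _ _)
  have hPmono : ∀ k k', k ≤ k' → P k → P k' := by
    intro k k' hkk hPk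
    show AvoidsInc r (w.take (L - k'))
    have h1 : w.take (L - k') = (w.take (L - k)).take (L - k') := by
      rw [List.take_take, min_eq_left (by omega)]
    rw [h1]
    exact hPk.of_infix (List.take_prefix _ _).isInfix
  have hBiff : ∀ k, 1 ≤ k → (DecompB r k w ↔ (k0 ≤ k ∧ k ≤ s)) := by
    intro k hk1
    constructor
    · rintro ⟨u, v, hweq, hvl, hvc, hua⟩
      have hLuv : L = u.length + k := by rw [hLdef, hweq, List.length_append, hvl]
      have hLu : L - k = u.length := by omega
      have hd : w.drop (L - k) = v := by rw [hLu, hweq, List.drop_left]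
      have ht : w.take (L - k) = u := by rw [hLu, hweq, List.take_left]
      refine ⟨hk0min k ?_, hsmax k (by omega) ?_⟩
      · show AvoidsInc r (w.take (L - k))
        rw [ht]; exact hua
      · show (w.drop (L - k)).Chain' (· < ·)
        rw [hd]; exact hvc
    · rintro ⟨hk0k, hks⟩
      refine ⟨w.take (L - k), w.drop (L - k), (List.take_append_drop _ _).symm, ?_,
        hQmono k hks, hPmono k0 k hk0k hPk0⟩
      rw [List.length_drop]
      omega
  have havIff : AvoidsInc r w ↔ k0 = 0 := by
    rw [hk0def, Nat.find_eq_zero]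
    have h1 : w.take (L - 0) = w := by rw [Nat.sub_zero, hLdef, List.take_length]
    show _ ↔ AvoidsInc r (w.take (L - 0))
    rw [h1]
  have hsn : s ≤ n := by
    have hnd := nodup_of_chain'_lt hQs
    have hlen := hnd.length_le_card
    rw [List.length_drop, Fintype.card_fin] at hlen
    omega
  by_cases hav : AvoidsInc r w
  · have hsr : s < r := by
      by_contra h
      push_neg at h
      apply hav
      refine ⟨(w.drop (L - s)).take r,
        ((List.take_prefix _ _).isInfix).trans (List.drop_suffix _ _).isInfix, ?_,
        hQs.sublist (List.take_sublist _ _)⟩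
      rw [List.length_take, List.length_drop]
      omega
    have hk00 : k0 = 0 := havIff.1 hav
    rw [if_pos hav, if_pos ((hBiff 1 le_rfl).2 ⟨by omega, hs1⟩)]
    have hz : ∀ j ∈ Finset.Icc 1 n,
        (-(if DecompB r (j*r) w then (1:ℤ) else 0) +
          (if DecompB r (j*r+1) w then (1:ℤ) else 0)) = 0 := by
      intro j hj
      rw [Finset.mem_Icc] at hj
      have hjr : 1 * r ≤ j * r := Nat.mul_le_mul_right r hj.1
      rw [if_neg fun hB => by have := (hBiff (j*r) (by omega)).1 hB; omega,
        if_neg fun hB => by have := (hBiff (j*r+1) (by omega)).1 hB; omega]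
      ring
    rw [Finset.sum_congr rfl hz, Finset.sum_const_zero]
    ring
  · have hk0pos : 1 ≤ k0 := by
      rcases Nat.eq_zero_or_pos k0 with h | h
      · exact absurd (havIff.2 h) hav
      · exact h
    rw [if_neg hav]
    by_cases hsk : s < k0
    · have hz : ∀ k, 1 ≤ k → ¬ DecompB r k w := by
        intro k hk hB
        have := (hBiff k hk).1 hB
        omega
      rw [if_neg (hz 1 le_rfl)]
      have hz2 : ∀ j ∈ Finset.Icc 1 n,
          (-(if DecompB r (j*r) w then (1:ℤ) else 0) +
            (if DecompB r (j*r+1) w then (1:ℤ) else 0)) = 0 := by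
        intro j hj
        rw [Finset.mem_Icc] at hj
        have hjr : 1 * r ≤ j * r := Nat.mul_le_mul_right r hj.1
        rw [if_neg (hz (j*r) (by omega)), if_neg (hz (j*r+1) (by omega))]
        ring
      rw [Finset.sum_congr rfl hz2, Finset.sum_const_zero]
      ring
    · push_neg at hsk
      have hle : s + 1 ≤ k0 + r := by
        by_contra h
        push_neg at h
        apply hPk0
        have h1 : (w.take (L - k0)).drop (L - s) = (w.drop (L - s)).take (s - k0) := by
          rw [List.drop_take]
          congr 1
          omega
        have h2 : (w.drop (L - s)).take r = ((w.take (L - k0)).drop (L - s)).take r := by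
          rw [h1, List.take_take, min_eq_left (by omega)]
        refine ⟨(w.drop (L - s)).take r, ?_, ?_, hQs.sublist (List.take_sublist _ _)⟩
        · rw [h2]
          exact ((List.take_prefix _ _).isInfix).trans (List.drop_suffix _ _).isInfix
        · rw [List.length_take, List.length_drop]
          omega
      have hge : k0 + r ≤ s + 1 := by
        have hnP : ¬ P (k0 - 1) := Nat.find_min hPex (by omega)
        have hex : ∃ l, l <:+: w.take (L - (k0 - 1)) ∧ l.length = r ∧ l.Chain' (· < ·) :=
          not_not.1 hnP
        obtain ⟨l, hlinf, hlr, hlc⟩ := hex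
        set p := L - k0 with hpdef
        have hp1 : L - (k0 - 1) = p + 1 := by omega
        rw [hp1] at hlinf
        set t := w.take (p + 1) with htdef
        have htlen : t.length = p + 1 := by
          rw [htdef, List.length_take]
          omega
        have hrp : r ≤ p + 1 := by
          have := hlinf.sublist.length_le
          omega
        obtain ⟨a, b, hab⟩ := hlinf
        have hbnil : b = [] := by
          by_contra hb
          apply hPk0
          have hdl : t.dropLast = w.take p := by
            rw [List.dropLast_eq_take, htlen, htdef, List.take_take]
            congr 1
            omega
          have hdl2 : t.dropLast = (a ++ l) ++ b.dropLast := by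
            rw [← hab]
            exact List.dropLast_append_of_ne_nil hb
          have hLk0 : w.take (L - k0) = w.take p := by rw [hpdef]
          refine ⟨l, ?_, hlr, hlc⟩
          rw [hLk0, ← hdl, hdl2]
          exact ⟨a, b.dropLast, by simp [List.append_assoc]⟩
        have ht2 : t = a ++ l := by rw [← hab, hbnil, List.append_nil]
        have halen : a.length = p + 1 - r := by
          have : t.length = a.length + r := by rw [ht2, List.length_append, hlr]
          omega
        have hlt : l = t.drop (p + 1 - r) := by
          rw [ht2, ← halen, List.drop_left]
        have HF1 := (chain'_drop_iff t (p + 1 - r)).1 (by rw [← hlt]; exact hlc)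
        have HF2 := (chain'_drop_iff w (L - s)).1 hQs
        have hQbig : Q (k0 + r - 1) := by
          show (w.drop (L - (k0 + r - 1))).Chain' (· < ·)
          have hidx : L - (k0 + r - 1) = p + 1 - r := by omega
          rw [hidx, chain'_drop_iff]
          intro i hi h
          rcases le_or_gt (i + 1) p with hc | hc
          · have h2 : i + 1 < t.length := by omega
            have := HF1 i (by omega) h2
            simpa [htdef, List.getElem_take] using this
          · exact HF2 i (by omega) h
        have := hsmax (k0 + r - 1) (by omega) hQbig
        omega
      have heq : s + 1 = k0 + r := le_antisymm hle hge
      have hrw : ∀ k, 1 ≤ k → (if DecompB r k w then (1:ℤ) else 0)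
          = (if k0 ≤ k ∧ k ≤ s then (1:ℤ) else 0) :=
        fun k hk => if_congr (hBiff k hk) rfl rfl
      rw [hrw 1 le_rfl]
      have hrw2 : ∀ j ∈ Finset.Icc 1 n,
          (-(if DecompB r (j*r) w then (1:ℤ) else 0) +
            (if DecompB r (j*r+1) w then (1:ℤ) else 0))
          = (-(if k0 ≤ j*r ∧ j*r ≤ s then (1:ℤ) else 0) +
            (if k0 ≤ j*r+1 ∧ j*r+1 ≤ s then (1:ℤ) else 0)) := by
        intro j hj
        rw [Finset.mem_Icc] at hj
        have hjr : 1 * r ≤ j * r := Nat.mul_le_mul_right r hj.1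
        rw [hrw (j*r) (by omega), hrw (j*r+1) (by omega)]
      rw [Finset.sum_congr rfl hrw2]
      exact arith_lemma r n k0 s (by omega) hk0pos hsk heq hsn

/-- The fundamental recurrence:
`f_r(m) = ∑_{v ∈ V_1} f_r(m-v) + ∑_{j≥1} [ -∑_{v ∈ V_{jr}} f_r(m-v) + ∑_{v ∈ V_{jr+1}} f_r(m-v) ]`,
where `V_k` (the set of 0-1 vectors with `k` ones) is identified with the
`k`-element subsets of `Fin n`. -/
theorem wordAvoidCount_fundamental_recurrence (r n : ℕ) (hr : 2 ≤ r)
    (m : Fin n → ℕ) (hm : m ≠ 0) :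
    (wordAvoidCount r n m : ℤ) =
      (∑ S ∈ Finset.powersetCard 1 (Finset.univ : Finset (Fin n)),
        wordAvoidCountSub r n m S) +
      ∑ j ∈ Finset.Icc 1 n,
        (-(∑ S ∈ Finset.powersetCard (j * r) (Finset.univ : Finset (Fin n)),
            wordAvoidCountSub r n m S) +
          ∑ S ∈ Finset.powersetCard (j * r + 1) (Finset.univ : Finset (Fin n)),
            wordAvoidCountSub r n m S) := by
  classical
  rw [wordAvoidCount_eq, key_count r m 1 le_rfl]
  have key2 : ∀ j ∈ Finset.Icc 1 n,
      (-(∑ S ∈ Finset.powersetCard (j * r) (Finset.univ : Finset (Fin n)),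
            wordAvoidCountSub r n m S) +
          ∑ S ∈ Finset.powersetCard (j * r + 1) (Finset.univ : Finset (Fin n)),
            wordAvoidCountSub r n m S)
      = (-(((wordsF n m).filter (fun w => DecompB r (j*r) w)).card : ℤ) +
          (((wordsF n m).filter (fun w => DecompB r (j*r+1) w)).card : ℤ)) := by
    intro j hj
    simp only [Finset.mem_Icc] at hj
    have hjr : 1 ≤ j * r := by
      have : 1 * 1 ≤ j * r := Nat.mul_le_mul hj.1 (by omega)
      omega
    rw [key_count r m (j*r) hjr, key_count r m (j*r+1) (by omega)]
  rw [Finset.sum_congr rfl key2]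
  simp only [Finset.card_filter]
  push_cast
  simp only [← Finset.sum_neg_distrib, ← Finset.sum_add_distrib]
  rw [Finset.sum_comm (s := Finset.Icc 1 n)]
  rw [← Finset.sum_add_distrib]
  refine Finset.sum_congr rfl fun w hw => ?_
  have hwne : w ≠ [] := by
    rw [mem_wordsF] at hw
    intro h
    subst h
    apply hm
    funext j
    have := hw j
    simpa using this.symm
  exact per_word r n hr w hwne
end
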